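/- arXiv:1810.03692 — 5 statements merged into one kernel-verified Lean document; each statement's English description precedes it below -/
import Mathlib

section
/- For any T>0, α∈(-1,1) and h>0, ∫₀^T ∫_ℝ (1 - cos(ξh)) e^{-tξ²} |ξ|^α dξ dt ≤ C·h^{1-α}, where C = ∫_ℝ (1-cos η)|η|^{α-2} dη < ∞. -/
open MeasureTheory Real Set

theorem heat_kernel_space_increment (T : ℝ) (hT : 0 < T) (α : ℝ) (hα : α ∈ Ioo (-1 : ℝ) 1)
    (h : ℝ) (hh : 0 < h) :
    Integrable (fun η : ℝ => (1 - Real.cos η) * |η| ^ (α - 2)) ∧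
    ∫ t in Ioc 0 T, ∫ ξ : ℝ,
        (1 - Real.cos (ξ * h)) * Real.exp (-t * ξ ^ 2) * |ξ| ^ α
      ≤ (∫ η : ℝ, (1 - Real.cos η) * |η| ^ (α - 2)) * h ^ (1 - α) := by
  obtain ⟨hα1, hα2⟩ := hα
  have hf_meas : Measurable (fun η : ℝ => (1 - Real.cos η) * |η| ^ (α - 2)) := by fun_prop
  have hf_nonneg : ∀ η : ℝ, 0 ≤ (1 - Real.cos η) * |η| ^ (α - 2) := fun η =>
    mul_nonneg (by nlinarith [Real.cos_le_one η]) (Real.rpow_nonneg (abs_nonneg η) _)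
  -- integrability on (0, ∞)
  have hIoi : IntegrableOn (fun η : ℝ => (1 - Real.cos η) * |η| ^ (α - 2)) (Ioi 0) := by
    have h1 : IntegrableOn (fun η : ℝ => (1 - Real.cos η) * |η| ^ (α - 2)) (Ioc 0 1) := by
      have hg : IntegrableOn (fun x : ℝ => x ^ α) (Ioc 0 1) := by
        rw [integrableOn_Ioc_iff_integrableOn_Ioo]
        exact (intervalIntegral.integrableOn_Ioo_rpow_iff zero_lt_one).2 hα1
      refine MeasureTheory.Integrable.mono hg hf_meas.aestronglyMeasurable ?_
      filter_upwards [ae_restrict_mem measurableSet_Ioc] with x hx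
      have hx0 : 0 < x := hx.1
      rw [Real.norm_eq_abs, Real.norm_eq_abs, abs_of_nonneg (hf_nonneg x),
        abs_of_nonneg (Real.rpow_nonneg hx0.le α), abs_of_pos hx0]
      have hc : 1 - Real.cos x ≤ x ^ 2 / 2 := by
        nlinarith [Real.one_sub_sq_div_two_le_cos (x := x)]
      have hx2 : x ^ (2:ℕ) * x ^ (α - 2) = x ^ α := by
        rw [← Real.rpow_natCast x 2, ← Real.rpow_add hx0]; norm_num
      calc (1 - Real.cos x) * x ^ (α - 2) ≤ (x ^ 2 / 2) * x ^ (α - 2) :=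
            mul_le_mul_of_nonneg_right hc (Real.rpow_nonneg hx0.le _)
        _ ≤ x ^ 2 * x ^ (α - 2) :=
            mul_le_mul_of_nonneg_right (by nlinarith [sq_nonneg x]) (Real.rpow_nonneg hx0.le _)
        _ = x ^ α := hx2
    have h2 : IntegrableOn (fun η : ℝ => (1 - Real.cos η) * |η| ^ (α - 2)) (Ioi 1) := by
      have hg : IntegrableOn (fun x : ℝ => 2 * x ^ (α - 2)) (Ioi 1) :=
        ((integrableOn_Ioi_rpow_iff zero_lt_one).2 (by linarith)).const_mul 2
      refine MeasureTheory.Integrable.mono hg hf_meas.aestronglyMeasurable ?_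
      filter_upwards [ae_restrict_mem measurableSet_Ioi] with x hx
      have hx0 : (0:ℝ) < x := lt_trans zero_lt_one hx
      rw [Real.norm_eq_abs, Real.norm_eq_abs, abs_of_nonneg (hf_nonneg x),
        abs_of_nonneg (by positivity : (0:ℝ) ≤ 2 * x ^ (α - 2)), abs_of_pos hx0]
      exact mul_le_mul_of_nonneg_right (by nlinarith [Real.neg_one_le_cos x])
        (Real.rpow_nonneg hx0.le _)
    have := h1.union h2
    rwa [Ioc_union_Ioi_eq_Ioi zero_le_one] at this
  have hIic : IntegrableOn (fun η : ℝ => (1 - Real.cos η) * |η| ^ (α - 2)) (Iic 0) := by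
    rw [← Measure.map_neg_eq_self (volume : Measure ℝ)]
    have m : MeasurableEmbedding fun x : ℝ => -x := (Homeomorph.neg ℝ).measurableEmbedding
    rw [IntegrableOn, m.restrict_map, m.integrable_map_iff]
    simp_rw [Function.comp_def, Real.cos_neg, abs_neg, neg_preimage, neg_Iic, neg_zero]
    exact Iff.mpr integrableOn_Ici_iff_integrableOn_Ioi hIoi
  have h_int : Integrable (fun η : ℝ => (1 - Real.cos η) * |η| ^ (α - 2)) := by
    rw [← integrableOn_univ, ← Iic_union_Ioi (a := (0:ℝ))]
    exact hIic.union hIoi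
  refine ⟨h_int, ?_⟩
  set C : ℝ := ∫ η : ℝ, (1 - Real.cos η) * |η| ^ (α - 2) with hC
  have hC_nonneg : 0 ≤ C := integral_nonneg hf_nonneg
  -- scaling identity
  have key : ∀ ξ : ℝ, (1 - Real.cos (ξ * h)) * |ξ| ^ (α - 2)
      = h ^ (2 - α) * ((1 - Real.cos (h * ξ)) * |h * ξ| ^ (α - 2)) := by
    intro ξ
    rw [abs_mul, abs_of_pos hh, Real.mul_rpow hh.le (abs_nonneg ξ), mul_comm ξ h]
    have : h ^ (2 - α) * h ^ (α - 2) = 1 := by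
      rw [← Real.rpow_add hh]; norm_num
    calc (1 - Real.cos (h * ξ)) * |ξ| ^ (α - 2)
        = (h ^ (2 - α) * h ^ (α - 2)) * ((1 - Real.cos (h * ξ)) * |ξ| ^ (α - 2)) := by
          rw [this, one_mul]
      _ = h ^ (2 - α) * ((1 - Real.cos (h * ξ)) * (h ^ (α - 2) * |ξ| ^ (α - 2))) := by ring
  have h_int_comp : Integrable (fun ξ : ℝ => (1 - Real.cos (h * ξ)) * |h * ξ| ^ (α - 2)) :=
    h_int.comp_mul_left' hh.ne'
  have h_int_fh : Integrable (fun ξ : ℝ => (1 - Real.cos (ξ * h)) * |ξ| ^ (α - 2)) := by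
    simp_rw [key]
    exact h_int_comp.const_mul _
  have hD : (∫ ξ : ℝ, (1 - Real.cos (ξ * h)) * |ξ| ^ (α - 2)) = C * h ^ (1 - α) := by
    have hcomp : (∫ ξ : ℝ, (1 - Real.cos (h * ξ)) * |h * ξ| ^ (α - 2)) = |h⁻¹| * C := by
      simpa [smul_eq_mul] using
        MeasureTheory.Measure.integral_comp_mul_left
          (fun η : ℝ => (1 - Real.cos η) * |η| ^ (α - 2)) h
    calc (∫ ξ : ℝ, (1 - Real.cos (ξ * h)) * |ξ| ^ (α - 2))
        = ∫ ξ : ℝ, h ^ (2 - α) * ((1 - Real.cos (h * ξ)) * |h * ξ| ^ (α - 2)) := by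
          simp_rw [key]
      _ = h ^ (2 - α) * ∫ ξ : ℝ, (1 - Real.cos (h * ξ)) * |h * ξ| ^ (α - 2) :=
          integral_const_mul _ _
      _ = h ^ (2 - α) * (|h⁻¹| * C) := by rw [hcomp]
      _ = C * h ^ (1 - α) := by
          have : h ^ (2 - α) * h⁻¹ = h ^ (1 - α) := by
            rw [← Real.rpow_neg_one h, ← Real.rpow_add hh]; ring_nf
          rw [abs_of_pos (inv_pos.2 hh), ← mul_assoc, this]; ring
  -- nonnegativity of the double integrand
  have hg_nonneg : ∀ t ξ : ℝ, 0 ≤ (1 - Real.cos (ξ * h)) * Real.exp (-t * ξ ^ 2) * |ξ| ^ α :=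
    fun t ξ => mul_nonneg (mul_nonneg (by nlinarith [Real.cos_le_one (ξ * h)])
      (Real.exp_nonneg _)) (Real.rpow_nonneg (abs_nonneg _) _)
  have hg_meas : Measurable (Function.uncurry fun t ξ : ℝ =>
      (1 - Real.cos (ξ * h)) * Real.exp (-t * ξ ^ 2) * |ξ| ^ α) := by
    unfold Function.uncurry; fun_prop
  have hI : ∀ t : ℝ, (∫ ξ : ℝ, (1 - Real.cos (ξ * h)) * Real.exp (-t * ξ ^ 2) * |ξ| ^ α)
      = (∫⁻ ξ : ℝ, ENNReal.ofReal
          ((1 - Real.cos (ξ * h)) * Real.exp (-t * ξ ^ 2) * |ξ| ^ α)).toReal := fun t =>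
    integral_eq_lintegral_of_nonneg_ae (Filter.Eventually.of_forall fun ξ => hg_nonneg t ξ)
      (hg_meas.of_uncurry_left.aestronglyMeasurable)
  have hImeas : Measurable fun t : ℝ => ∫⁻ ξ : ℝ, ENNReal.ofReal
      ((1 - Real.cos (ξ * h)) * Real.exp (-t * ξ ^ 2) * |ξ| ^ α) :=
    Measurable.lintegral_prod_right (ENNReal.measurable_ofReal.comp hg_meas)
  have step2 : (∫ t in Ioc 0 T, ∫ ξ : ℝ,
        (1 - Real.cos (ξ * h)) * Real.exp (-t * ξ ^ 2) * |ξ| ^ α)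
      = (∫⁻ t in Ioc 0 T, ENNReal.ofReal (∫ ξ : ℝ,
          (1 - Real.cos (ξ * h)) * Real.exp (-t * ξ ^ 2) * |ξ| ^ α)).toReal := by
    refine integral_eq_lintegral_of_nonneg_ae
      (Filter.Eventually.of_forall fun t => integral_nonneg (hg_nonneg t)) ?_
    exact (hImeas.ennreal_toReal.aestronglyMeasurable.restrict).congr
      (Filter.Eventually.of_forall fun t => (hI t).symm)
  -- key pointwise (in ξ) estimate for the t-integral
  have hpt : ∀ ξ : ℝ, ξ ≠ 0 →
      (∫⁻ t in Ioc 0 T, ENNReal.ofReal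
        ((1 - Real.cos (ξ * h)) * Real.exp (-t * ξ ^ 2) * |ξ| ^ α))
      ≤ ENNReal.ofReal ((1 - Real.cos (ξ * h)) * |ξ| ^ (α - 2)) := by
    intro ξ hξ
    have hξ2 : (0:ℝ) < ξ ^ 2 := by positivity
    have hA_nonneg : 0 ≤ (1 - Real.cos (ξ * h)) * |ξ| ^ α :=
      mul_nonneg (by nlinarith [Real.cos_le_one (ξ * h)]) (Real.rpow_nonneg (abs_nonneg _) _)
    have hexp : (∫⁻ t in Ioc 0 T, ENNReal.ofReal (Real.exp (-t * ξ ^ 2)))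
        ≤ ENNReal.ofReal ((ξ ^ 2)⁻¹) := by
      have hint : IntegrableOn (fun t : ℝ => Real.exp (-t * ξ ^ 2)) (Ioi 0) := by
        have := exp_neg_integrableOn_Ioi 0 hξ2
        refine this.congr_fun (fun t _ => by ring_nf) measurableSet_Ioi
      have hval : (∫ t in Ioi (0:ℝ), Real.exp (-t * ξ ^ 2)) = (ξ ^ 2)⁻¹ := by
        have h0 : (∫ t in Ioi (0:ℝ), Real.exp (-(ξ ^ 2 * t)))
            = (ξ ^ 2)⁻¹ • ∫ x in Ioi (ξ ^ 2 * 0), Real.exp (-x) :=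
          integral_comp_mul_left_Ioi (fun u => Real.exp (-u)) 0 hξ2
        rw [mul_zero, integral_exp_neg_Ioi, neg_zero, Real.exp_zero, smul_eq_mul,
          mul_one] at h0
        rw [← h0]
        exact setIntegral_congr_fun measurableSet_Ioi (fun t _ => by ring_nf)
      calc (∫⁻ t in Ioc 0 T, ENNReal.ofReal (Real.exp (-t * ξ ^ 2)))
          ≤ ∫⁻ t in Ioi 0, ENNReal.ofReal (Real.exp (-t * ξ ^ 2)) :=
            lintegral_mono_set Ioc_subset_Ioi_self
        _ = ENNReal.ofReal (∫ t in Ioi (0:ℝ), Real.exp (-t * ξ ^ 2)) :=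
            (ofReal_integral_eq_lintegral_ofReal hint
              (Filter.Eventually.of_forall fun t => Real.exp_nonneg _)).symm
        _ = ENNReal.ofReal ((ξ ^ 2)⁻¹) := by rw [hval]
    have habs : |ξ| ^ α * (ξ ^ 2)⁻¹ = |ξ| ^ (α - 2) := by
      have h1 : |ξ| ^ (-2:ℝ) = (ξ ^ 2)⁻¹ := by
        rw [Real.rpow_neg (abs_nonneg ξ), show (2:ℝ) = ((2:ℕ):ℝ) by norm_num,
          Real.rpow_natCast, sq_abs]
      rw [← h1, ← Real.rpow_add (abs_pos.mpr hξ)]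
      ring_nf
    calc (∫⁻ t in Ioc 0 T, ENNReal.ofReal
          ((1 - Real.cos (ξ * h)) * Real.exp (-t * ξ ^ 2) * |ξ| ^ α))
        = ENNReal.ofReal ((1 - Real.cos (ξ * h)) * |ξ| ^ α)
            * ∫⁻ t in Ioc 0 T, ENNReal.ofReal (Real.exp (-t * ξ ^ 2)) := by
          rw [← lintegral_const_mul _ (by fun_prop)]
          congr 1; funext t
          rw [← ENNReal.ofReal_mul hA_nonneg]
          congr 1; ring
      _ ≤ ENNReal.ofReal ((1 - Real.cos (ξ * h)) * |ξ| ^ α) * ENNReal.ofReal ((ξ ^ 2)⁻¹) :=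
          mul_le_mul_right hexp _
      _ = ENNReal.ofReal ((1 - Real.cos (ξ * h)) * |ξ| ^ (α - 2)) := by
          rw [← ENNReal.ofReal_mul hA_nonneg, mul_assoc, habs]
  have hne : ∀ᵐ ξ : ℝ, ξ ≠ 0 := by
    refine ae_iff.mpr ?_
    have : {ξ : ℝ | ¬ ξ ≠ 0} = {0} := by ext x; simp
    rw [this]
    exact measure_singleton 0
  have hbound : (∫⁻ t in Ioc 0 T, ENNReal.ofReal (∫ ξ : ℝ,
        (1 - Real.cos (ξ * h)) * Real.exp (-t * ξ ^ 2) * |ξ| ^ α))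
      ≤ ENNReal.ofReal (C * h ^ (1 - α)) := by
    calc (∫⁻ t in Ioc 0 T, ENNReal.ofReal (∫ ξ : ℝ,
          (1 - Real.cos (ξ * h)) * Real.exp (-t * ξ ^ 2) * |ξ| ^ α))
        ≤ ∫⁻ t in Ioc 0 T, ∫⁻ ξ : ℝ, ENNReal.ofReal
            ((1 - Real.cos (ξ * h)) * Real.exp (-t * ξ ^ 2) * |ξ| ^ α) := by
          refine lintegral_mono fun t => ?_
          rw [hI t]; exact ENNReal.ofReal_toReal_le
      _ = ∫⁻ ξ : ℝ, ∫⁻ t in Ioc 0 T, ENNReal.ofReal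
            ((1 - Real.cos (ξ * h)) * Real.exp (-t * ξ ^ 2) * |ξ| ^ α) :=
          lintegral_lintegral_swap (ENNReal.measurable_ofReal.comp hg_meas).aemeasurable
      _ ≤ ∫⁻ ξ : ℝ, ENNReal.ofReal ((1 - Real.cos (ξ * h)) * |ξ| ^ (α - 2)) := by
          refine lintegral_mono_ae ?_
          filter_upwards [hne] with ξ hξ
          exact hpt ξ hξ
      _ = ENNReal.ofReal (∫ ξ : ℝ, (1 - Real.cos (ξ * h)) * |ξ| ^ (α - 2)) :=
          (ofReal_integral_eq_lintegral_ofReal h_int_fh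
            (Filter.Eventually.of_forall fun ξ => mul_nonneg
              (by nlinarith [Real.cos_le_one (ξ * h)])
              (Real.rpow_nonneg (abs_nonneg _) _))).symm
      _ = ENNReal.ofReal (C * h ^ (1 - α)) := by rw [hD]
  rw [step2]
  calc (∫⁻ t in Ioc 0 T, ENNReal.ofReal (∫ ξ : ℝ,
        (1 - Real.cos (ξ * h)) * Real.exp (-t * ξ ^ 2) * |ξ| ^ α)).toReal
      ≤ (ENNReal.ofReal (C * h ^ (1 - α))).toReal :=
        ENNReal.toReal_mono ENNReal.ofReal_ne_top hbound
    _ = C * h ^ (1 - α) :=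
        ENNReal.toReal_ofReal (mul_nonneg hC_nonneg (Real.rpow_nonneg hh.le _))
end

section
/- For any T>0, α∈(-1,1) and h>0, ∫₀^T ∫_ℝ |e^{-(t+h)ξ²/2} - e^{-tξ²/2}|² |ξ|^α dξ dt ≤ C_α h^{(1-α)/2}, where C_α = ∫_ℝ (1-e^{-η²/2})²/|η|^{2-α} dη < ∞. -/
open MeasureTheory Real Set

theorem heat_kernel_time_increment (T : ℝ) (hT : 0 < T) (α : ℝ) (hα : α ∈ Ioo (-1 : ℝ) 1)
    (h : ℝ) (hh : 0 < h) :
    Integrable (fun η : ℝ => (1 - Real.exp (-η ^ 2 / 2)) ^ 2 / |η| ^ (2 - α)) ∧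
    ∫ t in Ioc 0 T, ∫ ξ : ℝ,
        |Real.exp (-(t + h) * ξ ^ 2 / 2) - Real.exp (-t * ξ ^ 2 / 2)| ^ 2 * |ξ| ^ α
      ≤ (∫ η : ℝ, (1 - Real.exp (-η ^ 2 / 2)) ^ 2 / |η| ^ (2 - α)) * h ^ ((1 - α) / 2) := by
  obtain ⟨hα1, hα2⟩ := hα
  set g : ℝ → ℝ := fun η => (1 - Real.exp (-η ^ 2 / 2)) ^ 2 / |η| ^ (2 - α) with hgdef
  have hg_meas : Measurable g := by fun_prop
  have hg_nonneg : ∀ η, 0 ≤ g η := fun η =>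
    div_nonneg (sq_nonneg _) (Real.rpow_nonneg (abs_nonneg _) _)
  -- elementary exponential bounds
  have expA : ∀ x : ℝ, 0 ≤ x → 0 ≤ 1 - Real.exp (-x) ∧ 1 - Real.exp (-x) ≤ 1 ∧
      1 - Real.exp (-x) ≤ x := by
    intro x hx
    have h1 : Real.exp (-x) ≤ 1 := Real.exp_le_one_iff.mpr (by linarith)
    have h2 := Real.exp_pos (-x)
    have h3 := Real.add_one_le_exp (-x)
    exact ⟨by linarith, by linarith, by linarith⟩
  -- integrability on the tail (1, ∞)
  have htail : IntegrableOn g (Ioi (1:ℝ)) := by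
    refine Integrable.mono' (integrableOn_Ioi_rpow_of_lt (by linarith : α - 2 < -1) one_pos)
      hg_meas.aestronglyMeasurable ?_
    rw [ae_restrict_iff' measurableSet_Ioi]
    refine ae_of_all _ fun η hη => ?_
    have hη1 : (1:ℝ) < η := hη
    have hηpos : (0:ℝ) < η := lt_trans one_pos hη1
    rw [Real.norm_eq_abs, abs_of_nonneg (hg_nonneg η)]
    have habs : |η| = η := abs_of_pos hηpos
    have h2 : η ^ (α - 2) = 1 / η ^ (2 - α) := by
      rw [one_div, ← Real.rpow_neg hηpos.le, neg_sub]
    have hnum : (1 - Real.exp (-η ^ 2 / 2)) ^ 2 ≤ 1 := by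
      obtain ⟨a, b, _⟩ := expA (η ^ 2 / 2) (by positivity)
      have hrw : -(η ^ 2 / 2) = -η ^ 2 / 2 := by ring
      rw [hrw] at a b
      nlinarith
    calc g η = (1 - Real.exp (-η ^ 2 / 2)) ^ 2 / |η| ^ (2 - α) := by rw [hgdef]
      _ ≤ 1 / |η| ^ (2 - α) :=
          div_le_div_of_nonneg_right hnum (Real.rpow_nonneg (abs_nonneg _) _)
      _ = η ^ (α - 2) := by rw [habs, h2]
  -- integrability on [-1, 1]
  have hmid : IntegrableOn g (Icc (-1:ℝ) 1) := by
    apply Measure.integrableOn_of_bounded (M := 1/4) measure_Icc_lt_top.ne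
      hg_meas.aestronglyMeasurable
    rw [ae_restrict_iff' measurableSet_Icc]
    refine ae_of_all _ fun η hη => ?_
    rw [Real.norm_eq_abs, abs_of_nonneg (hg_nonneg η)]
    rcases eq_or_ne η 0 with rfl | hη0
    · have hz : g 0 = 0 := by
        simp only [hgdef]
        norm_num
      rw [hz]; norm_num
    · have habs : (0:ℝ) < |η| := abs_pos.mpr hη0
      have hb1 : |η| ≤ 1 := abs_le.mpr ⟨hη.1, hη.2⟩
      have hnum : (1 - Real.exp (-η ^ 2 / 2)) ^ 2 ≤ (η ^ 2 / 2) ^ 2 := by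
        have hx : (0:ℝ) ≤ η ^ 2 / 2 := by positivity
        obtain ⟨a, _, c⟩ := expA (η ^ 2 / 2) hx
        have hrw : -(η ^ 2 / 2) = -η ^ 2 / 2 := by ring
        rw [hrw] at a c
        nlinarith
      have key4 : η ^ 4 = |η| ^ (4:ℝ) := by
        rw [show ((4:ℝ)) = ((4:ℕ):ℝ) by norm_num, Real.rpow_natCast,
          ← abs_pow, abs_of_nonneg (by positivity : (0:ℝ) ≤ η ^ 4)]
      have key5 : |η| ^ (4:ℝ) / |η| ^ (2 - α) = |η| ^ (2 + α) := by
        rw [← Real.rpow_sub habs]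
        congr 1
        ring
      calc g η ≤ (η ^ 2 / 2) ^ 2 / |η| ^ (2 - α) :=
            div_le_div_of_nonneg_right hnum (Real.rpow_nonneg (abs_nonneg _) _)
        _ = |η| ^ (2 + α) / 4 := by
            rw [show (η ^ 2 / 2) ^ 2 = η ^ 4 / 4 by ring, key4, div_div, mul_comm,
              ← div_div, key5]
        _ ≤ 1 / 4 :=
            div_le_div_of_nonneg_right
              (Real.rpow_le_one (abs_nonneg _) hb1 (by linarith)) (by norm_num)
  -- integrability on (-∞, -1)
  have hneg : IntegrableOn g (Iio (-1:ℝ)) := by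
    have hpre : Iio (-1:ℝ) = Neg.neg ⁻¹' Ioi (1:ℝ) := by
      ext x; simp [lt_neg]
    have heven : g ∘ Neg.neg = g := by
      funext η
      simp only [hgdef, Function.comp_apply, abs_neg, neg_pow, even_two.neg_pow]
    rw [hpre, ← heven]
    exact ((Measure.measurePreserving_neg (volume : Measure ℝ)).integrableOn_comp_preimage
      (Homeomorph.neg ℝ).measurableEmbedding).2 htail
  have hint : Integrable g := by
    rw [← integrableOn_univ]
    have hcover : (univ : Set ℝ) ⊆ Iio (-1) ∪ (Icc (-1) 1 ∪ Ioi 1) := by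
      intro x _
      rcases lt_or_ge x (-1) with hx | hx
      · exact Or.inl hx
      rcases le_or_gt x 1 with hx2 | hx2
      · exact Or.inr (Or.inl ⟨hx, hx2⟩)
      · exact Or.inr (Or.inr hx2)
    exact (hneg.union (hmid.union htail)).mono_set hcover
  refine ⟨hint, ?_⟩
  -- the main estimate
  set c : ℝ → ℝ := fun ξ => (1 - Real.exp (-(h * ξ ^ 2) / 2)) ^ 2 * |ξ| ^ α with hcdef
  set K : ℝ → ℝ := fun ξ => (1 - Real.exp (-(h * ξ ^ 2) / 2)) ^ 2 / |ξ| ^ (2 - α) with hKdef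
  have hc_meas : Measurable c := by rw [hcdef]; fun_prop
  have hc_nonneg : ∀ ξ, 0 ≤ c ξ := fun ξ =>
    mul_nonneg (sq_nonneg _) (Real.rpow_nonneg (abs_nonneg _) _)
  have hK_nonneg : ∀ ξ, 0 ≤ K ξ := fun ξ =>
    div_nonneg (sq_nonneg _) (Real.rpow_nonneg (abs_nonneg _) _)
  have hsqh : 0 < Real.sqrt h := Real.sqrt_pos.mpr hh
  have hKg : ∀ ξ, K ξ = (Real.sqrt h) ^ (2 - α) * g (Real.sqrt h * ξ) := by
    intro ξ
    have h1 : (Real.sqrt h * ξ) ^ 2 = h * ξ ^ 2 := by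
      rw [mul_pow, Real.sq_sqrt hh.le]
    have h2 : |Real.sqrt h * ξ| = Real.sqrt h * |ξ| := by
      rw [abs_mul, abs_of_pos hsqh]
    simp only [hgdef, hKdef, h1, h2]
    rw [Real.mul_rpow hsqh.le (abs_nonneg ξ)]
    rcases eq_or_ne ξ 0 with rfl | hξ0
    · simp [Real.zero_rpow (show (2:ℝ) - α ≠ 0 by linarith)]
    · have habs : (0:ℝ) < |ξ| := abs_pos.mpr hξ0
      have d1 := (Real.rpow_pos_of_pos hsqh (2 - α)).ne'
      have d2 := (Real.rpow_pos_of_pos habs (2 - α)).ne'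
      field_simp
  have hK_int : Integrable K := by
    have h1 : Integrable (fun ξ => (Real.sqrt h) ^ (2 - α) * g (Real.sqrt h * ξ)) :=
      (hint.comp_mul_left' hsqh.ne').const_mul _
    exact h1.congr (ae_of_all _ fun ξ => (hKg ξ).symm)
  have hK_val : ∫ ξ, K ξ = (∫ η, g η) * h ^ ((1 - α) / 2) := by
    have h1 : ∫ ξ, K ξ = (Real.sqrt h) ^ (2 - α) * ∫ ξ, g (Real.sqrt h * ξ) := by
      simp_rw [hKg]
      exact integral_const_mul _ _
    rw [h1, Measure.integral_comp_mul_left g (Real.sqrt h), smul_eq_mul,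
      abs_of_pos (inv_pos.mpr hsqh)]
    have h2 : (Real.sqrt h) ^ (2 - α) * (Real.sqrt h)⁻¹ = h ^ ((1 - α) / 2) := by
      rw [← Real.rpow_neg_one (Real.sqrt h), ← Real.rpow_add hsqh,
        Real.sqrt_eq_rpow, ← Real.rpow_mul hh.le]
      norm_num
      ring_nf
    rw [← h2]; ring
  have hc0 : c 0 = 0 := by
    rw [hcdef]; norm_num
  -- key pointwise bound after Tonelli
  have key : ∀ ξ : ℝ,
      (∫⁻ t in Ioc (0:ℝ) T, ENNReal.ofReal (Real.exp (-t * ξ ^ 2) * c ξ)) ≤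
        ENNReal.ofReal (K ξ) := by
    intro ξ
    have heq : ∀ t : ℝ, ENNReal.ofReal (Real.exp (-t * ξ ^ 2) * c ξ) =
        ENNReal.ofReal (Real.exp (-t * ξ ^ 2)) * ENNReal.ofReal (c ξ) := fun t =>
      ENNReal.ofReal_mul (Real.exp_pos _).le
    simp_rw [heq]
    rw [lintegral_mul_const _ (by fun_prop)]
    rcases eq_or_ne ξ 0 with rfl | hξ0
    · rw [hc0]; simp
    · have hξ2 : (0:ℝ) < ξ ^ 2 := by positivity
      have hInt : IntegrableOn (fun t => Real.exp (-t * ξ ^ 2)) (Ioc 0 T) :=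
        Continuous.integrableOn_Ioc (by fun_prop)
      have hlin : (∫⁻ t in Ioc (0:ℝ) T, ENNReal.ofReal (Real.exp (-t * ξ ^ 2))) =
          ENNReal.ofReal (∫ t in Ioc (0:ℝ) T, Real.exp (-t * ξ ^ 2)) :=
        (ofReal_integral_eq_lintegral_ofReal hInt
          (ae_of_all _ fun t => (Real.exp_pos _).le)).symm
      rw [hlin]
      have hval : ∫ t in Ioc (0:ℝ) T, Real.exp (-t * ξ ^ 2) ≤ 1 / ξ ^ 2 := by
        have e1 : ∫ t in Ioc (0:ℝ) T, Real.exp (-t * ξ ^ 2) =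
            ∫ t in (0:ℝ)..T, Real.exp (-ξ ^ 2 * t) := by
          rw [intervalIntegral.integral_of_le hT.le]
          simp_rw [show ∀ t : ℝ, -ξ ^ 2 * t = -t * ξ ^ 2 from fun t => by ring]
        rw [e1, intervalIntegral.integral_comp_mul_left Real.exp
          (show -ξ ^ 2 ≠ 0 by simpa using hξ2.ne'), integral_exp]
        have hE : 0 < Real.exp (-ξ ^ 2 * T) := Real.exp_pos _
        rw [smul_eq_mul, mul_zero, Real.exp_zero]
        have heq2 : (-ξ ^ 2)⁻¹ * (Real.exp (-ξ ^ 2 * T) - 1) =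
            (1 - Real.exp (-ξ ^ 2 * T)) / ξ ^ 2 := by
          field_simp
          ring
        rw [heq2]
        gcongr
        linarith
      calc ENNReal.ofReal (∫ t in Ioc (0:ℝ) T, Real.exp (-t * ξ ^ 2)) * ENNReal.ofReal (c ξ)
          ≤ ENNReal.ofReal (1 / ξ ^ 2) * ENNReal.ofReal (c ξ) :=
            mul_le_mul_left (ENNReal.ofReal_le_ofReal hval) _
        _ = ENNReal.ofReal (1 / ξ ^ 2 * c ξ) := (ENNReal.ofReal_mul (by positivity)).symm
        _ = ENNReal.ofReal (K ξ) := by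
            congr 1
            have habs : (0:ℝ) < |ξ| := abs_pos.mpr hξ0
            have hsq : ξ ^ 2 = |ξ| ^ ((2:ℕ):ℝ) := by
              rw [Real.rpow_natCast, sq_abs]
            rw [hcdef, hKdef]
            simp only [hsq]
            rw [Real.rpow_sub habs]
            have d1 := (Real.rpow_pos_of_pos habs α).ne'
            have d2 := (Real.rpow_pos_of_pos habs ((2:ℕ):ℝ)).ne'
            field_simp
            simp only [Real.rpow_natCast, Real.rpow_two]
            ring
  -- pointwise identity for the integrand
  have hf_eq : ∀ t ξ : ℝ,
      |Real.exp (-(t + h) * ξ ^ 2 / 2) - Real.exp (-t * ξ ^ 2 / 2)| ^ 2 * |ξ| ^ α =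
        Real.exp (-t * ξ ^ 2) * c ξ := by
    intro t ξ
    rw [sq_abs, hcdef]
    simp only []
    rw [show -(t + h) * ξ ^ 2 / 2 = -t * ξ ^ 2 / 2 + -(h * ξ ^ 2) / 2 by ring, Real.exp_add,
      show -t * ξ ^ 2 = -t * ξ ^ 2 / 2 + -t * ξ ^ 2 / 2 by ring, Real.exp_add]
    ring
  have hF_nonneg : ∀ t ξ : ℝ, 0 ≤ Real.exp (-t * ξ ^ 2) * c ξ := fun t ξ =>
    mul_nonneg (Real.exp_pos _).le (hc_nonneg ξ)
  have hF_meas : Measurable (fun p : ℝ × ℝ =>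
      ENNReal.ofReal (Real.exp (-p.1 * p.2 ^ 2) * c p.2)) := by fun_prop
  set I : ℝ → ENNReal := fun t => ∫⁻ ξ, ENNReal.ofReal (Real.exp (-t * ξ ^ 2) * c ξ) with hIdef
  have hI_meas : Measurable I := hF_meas.lintegral_prod_right'
  have hinner : ∀ t : ℝ,
      (∫ ξ : ℝ, |Real.exp (-(t + h) * ξ ^ 2 / 2) - Real.exp (-t * ξ ^ 2 / 2)| ^ 2 * |ξ| ^ α) =
        (I t).toReal := by
    intro t
    rw [show (fun ξ : ℝ =>
        |Real.exp (-(t + h) * ξ ^ 2 / 2) - Real.exp (-t * ξ ^ 2 / 2)| ^ 2 * |ξ| ^ α) =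
        fun ξ => Real.exp (-t * ξ ^ 2) * c ξ from funext (hf_eq t)]
    exact integral_eq_lintegral_of_nonneg_ae (ae_of_all _ (hF_nonneg t))
      (((show Measurable fun ξ : ℝ => Real.exp (-t * ξ ^ 2) by fun_prop).mul
        hc_meas).aestronglyMeasurable)
  calc ∫ t in Ioc (0:ℝ) T, ∫ ξ : ℝ,
        |Real.exp (-(t + h) * ξ ^ 2 / 2) - Real.exp (-t * ξ ^ 2 / 2)| ^ 2 * |ξ| ^ α
      = ∫ t in Ioc (0:ℝ) T, (I t).toReal :=
        integral_congr_ae (ae_of_all _ fun t => hinner t)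
    _ = (∫⁻ t in Ioc (0:ℝ) T, ENNReal.ofReal ((I t).toReal)).toReal :=
        integral_eq_lintegral_of_nonneg_ae (ae_of_all _ fun t => ENNReal.toReal_nonneg)
          hI_meas.ennreal_toReal.aestronglyMeasurable
    _ ≤ (ENNReal.ofReal (∫ ξ, K ξ)).toReal := by
        apply ENNReal.toReal_mono ENNReal.ofReal_ne_top
        calc ∫⁻ t in Ioc (0:ℝ) T, ENNReal.ofReal ((I t).toReal)
            ≤ ∫⁻ t in Ioc (0:ℝ) T, I t := lintegral_mono fun t => ENNReal.ofReal_toReal_le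
          _ = ∫⁻ ξ, ∫⁻ t in Ioc (0:ℝ) T, ENNReal.ofReal (Real.exp (-t * ξ ^ 2) * c ξ) :=
              lintegral_lintegral_swap hF_meas.aemeasurable
          _ ≤ ∫⁻ ξ, ENNReal.ofReal (K ξ) := lintegral_mono key
          _ = ENNReal.ofReal (∫ ξ, K ξ) :=
              (ofReal_integral_eq_lintegral_ofReal hK_int (ae_of_all _ hK_nonneg)).symm
    _ = ∫ ξ, K ξ := ENNReal.toReal_ofReal (integral_nonneg hK_nonneg)
    _ = (∫ η, g η) * h ^ ((1 - α) / 2) := hK_val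
end

section
/- For any T>0, α∈(-1,1) and h>0, ∫₀^T ∫_ℝ |sin((t+h)|ξ|)/|ξ| − sin(t|ξ|)/|ξ||² |ξ|^α dξ dt ≤ C_α T h^{1-α}, where C_α = 4∫_ℝ min(1,|η|²)/|η|^{2-α} dη < ∞. -/
open MeasureTheory Real Set

lemma sin_diff_le_abs (a b : ℝ) : |Real.sin a - Real.sin b| ≤ |a - b| := by
  rw [Real.sin_sub_sin]
  calc |2 * Real.sin ((a - b) / 2) * Real.cos ((a + b) / 2)|
      = 2 * |Real.sin ((a - b) / 2)| * |Real.cos ((a + b) / 2)| := by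
        rw [abs_mul, abs_mul]; norm_num
    _ ≤ 2 * |(a - b) / 2| * 1 := by
        apply mul_le_mul (mul_le_mul_of_nonneg_left Real.abs_sin_le_abs (by norm_num))
          (Real.abs_cos_le_one _) (abs_nonneg _)
        positivity
    _ = |a - b| := by rw [abs_div, abs_two]; ring

theorem wave_kernel_time_increment (T : ℝ) (hT : 0 < T) (α : ℝ) (hα : α ∈ Ioo (-1 : ℝ) 1)
    (h : ℝ) (hh : 0 < h) :
    Integrable (fun η : ℝ => min 1 (|η| ^ 2) / |η| ^ (2 - α)) ∧
    ∫ t in Ioc 0 T, ∫ ξ : ℝ,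
        (abs (Real.sin ((t + h) * |ξ|) / |ξ| - Real.sin (t * |ξ|) / |ξ|)) ^ 2 * |ξ| ^ α
      ≤ (4 * ∫ η : ℝ, min 1 (|η| ^ 2) / |η| ^ (2 - α)) * T * h ^ (1 - α) := by
  obtain ⟨hα1, hα2⟩ := hα
  set g : ℝ → ℝ := fun η => min 1 (|η| ^ 2) / |η| ^ (2 - α) with hgdef
  have hg_nonneg : ∀ η, 0 ≤ g η := fun η =>
    div_nonneg (le_min zero_le_one (by positivity)) (Real.rpow_nonneg (abs_nonneg _) _)
  -- integrability of g on pieces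
  have h1 : IntegrableOn g (Ioc 0 1) := by
    have hint : IntegrableOn (fun x : ℝ => x ^ α) (Ioc 0 1) := by
      have := intervalIntegral.intervalIntegrable_rpow' (a := (0:ℝ)) (b := 1) hα1
      rwa [intervalIntegrable_iff_integrableOn_Ioc_of_le zero_le_one] at this
    refine hint.congr_fun (fun x hx => ?_) measurableSet_Ioc
    obtain ⟨hx0, hx1⟩ := hx
    have habs : |x| = x := abs_of_pos hx0
    have hmin : min 1 (x ^ 2) = x ^ 2 :=
      min_eq_right (pow_le_one₀ hx0.le hx1)
    simp only [hgdef, habs, hmin]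
    rw [show (x:ℝ) ^ (2:ℕ) = x ^ ((2:ℕ):ℝ) from (Real.rpow_natCast x 2).symm,
      ← Real.rpow_sub hx0]
    norm_num
  have h2 : IntegrableOn g (Ioi 1) := by
    have hint : IntegrableOn (fun x : ℝ => x ^ (α - 2)) (Ioi 1) :=
      integrableOn_Ioi_rpow_of_lt (by linarith) one_pos
    refine hint.congr_fun (fun x hx => ?_) measurableSet_Ioi
    have hx0 : (0:ℝ) < x := lt_trans one_pos hx
    have habs : |x| = x := abs_of_pos hx0
    have hmin : min 1 (x ^ 2) = 1 := min_eq_left (one_le_pow₀ (le_of_lt hx))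
    simp only [hgdef, habs, hmin]
    rw [show α - 2 = -(2 - α) by ring, Real.rpow_neg hx0.le, one_div]
  have h1' : IntegrableOn g (Icc 0 1) := h1.congr_set_ae Ioc_ae_eq_Icc.symm
  have hneg : ∀ s : Set ℝ, MeasurableSet s → IntegrableOn g s → IntegrableOn g (-s) := by
    intro s ms hs
    have hs' : Integrable (Set.indicator s g) := (integrable_indicator_iff ms).mpr hs
    refine (integrable_indicator_iff ms.neg).mp ?_
    refine hs'.comp_neg.congr (Filter.Eventually.of_forall fun x => ?_)
    by_cases hx : -x ∈ s <;>
      simp [Set.indicator, hx, Set.mem_neg, hgdef, abs_neg]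
  have h3 : IntegrableOn g (Icc (-1) 0) := by
    have := hneg _ measurableSet_Icc h1'
    simpa using this
  have h4 : IntegrableOn g (Iio (-1)) := by
    have := hneg _ measurableSet_Ioi h2
    simpa using this
  have hgint : Integrable g := by
    rw [← integrableOn_univ]
    have hbig : IntegrableOn g (Iio (-1) ∪ (Icc (-1) 0 ∪ (Icc 0 1 ∪ Ioi 1))) :=
      h4.union (h3.union (h1'.union h2))
    refine hbig.mono_set fun x _ => ?_
    rcases lt_or_ge x (-1) with hx | hx
    · exact Or.inl hx
    rcases le_or_gt x 0 with hx0 | hx0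
    · exact Or.inr (Or.inl ⟨hx, hx0⟩)
    rcases le_or_gt x 1 with hx1 | hx1
    · exact Or.inr (Or.inr (Or.inl ⟨hx0.le, hx1⟩))
    · exact Or.inr (Or.inr (Or.inr hx1))
  refine ⟨hgint, ?_⟩
  set I : ℝ := ∫ η, g η with hIdef
  have hI0 : 0 ≤ I := integral_nonneg hg_nonneg
  -- pointwise bound
  have hpt : ∀ t ξ : ℝ,
      (abs (Real.sin ((t + h) * |ξ|) / |ξ| - Real.sin (t * |ξ|) / |ξ|)) ^ 2 * |ξ| ^ α
        ≤ 4 * h ^ (2 - α) * g (h * ξ) := by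
    intro t ξ
    rcases eq_or_ne ξ 0 with rfl | hξ
    · have : g 0 = 0 := by simp [hgdef]
      simp [this]
    · have hξ0 : (0:ℝ) < |ξ| := abs_pos.mpr hξ
      set x : ℝ := h * |ξ| with hxdef
      have hx0 : 0 < x := mul_pos hh hξ0
      have habs : |h * ξ| = x := by rw [abs_mul, abs_of_pos hh]
      have hpow : |ξ| ^ (2 - α) * |ξ| ^ α = |ξ| ^ 2 := by
        rw [← Real.rpow_add hξ0, sub_add_cancel,
          show ((2:ℝ) = ((2:ℕ):ℝ)) by norm_num, Real.rpow_natCast]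
      have hrw : g (h * ξ) = min 1 (x ^ 2) / (h ^ (2 - α) * |ξ| ^ (2 - α)) := by
        simp only [hgdef, habs]
        rw [hxdef, Real.mul_rpow hh.le (abs_nonneg ξ)]
      have hsin : |Real.sin ((t + h) * |ξ|) - Real.sin (t * |ξ|)| ≤ min 2 x := by
        refine le_min ?_ ?_
        · calc |Real.sin ((t + h) * |ξ|) - Real.sin (t * |ξ|)|
              ≤ |Real.sin ((t + h) * |ξ|)| + |Real.sin (t * |ξ|)| := abs_sub _ _
            _ ≤ 1 + 1 := add_le_add (Real.abs_sin_le_one _) (Real.abs_sin_le_one _)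
            _ = 2 := by norm_num
        · have := sin_diff_le_abs ((t + h) * |ξ|) (t * |ξ|)
          have heq : (t + h) * |ξ| - t * |ξ| = x := by rw [hxdef]; ring
          rwa [heq, abs_of_pos hx0] at this
      have hb : (min 2 x) ^ 2 ≤ 4 * min 1 (x ^ 2) := by
        have h0 : 0 ≤ min 2 x := le_min (by norm_num) hx0.le
        rcases le_total (x ^ 2) 1 with hc | hc
        · rw [min_eq_right hc]
          have hxle : min 2 x ≤ x := min_le_right _ _
          nlinarith
        · rw [min_eq_left hc]
          have hxle : min 2 x ≤ 2 := min_le_left _ _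
          nlinarith
      have hdiff : Real.sin ((t + h) * |ξ|) / |ξ| - Real.sin (t * |ξ|) / |ξ|
          = (Real.sin ((t + h) * |ξ|) - Real.sin (t * |ξ|)) / |ξ| := (sub_div _ _ _).symm
      have hnum : (abs (Real.sin ((t + h) * |ξ|) / |ξ| - Real.sin (t * |ξ|) / |ξ|)) ^ 2
          = |Real.sin ((t + h) * |ξ|) - Real.sin (t * |ξ|)| ^ 2 / |ξ| ^ 2 := by
        rw [hdiff, abs_div, abs_abs, div_pow]
      have hnum_le : |Real.sin ((t + h) * |ξ|) - Real.sin (t * |ξ|)| ^ 2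
          ≤ 4 * min 1 (x ^ 2) :=
        le_trans (pow_le_pow_left₀ (abs_nonneg _) hsin 2) hb
      have hrhs : 4 * h ^ (2 - α) * g (h * ξ)
          = 4 * min 1 (x ^ 2) / |ξ| ^ 2 * |ξ| ^ α := by
        rw [hrw]
        have hne1 : (h:ℝ) ^ (2 - α) ≠ 0 := (Real.rpow_pos_of_pos hh _).ne'
        have hne2 : |ξ| ^ (2 - α) ≠ 0 := (Real.rpow_pos_of_pos hξ0 _).ne'
        have hne3 : |ξ| ^ (2:ℕ) ≠ 0 := pow_ne_zero _ hξ0.ne'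
        rw [← hpow]
        have hne4 : |ξ| ^ α ≠ 0 := (Real.rpow_pos_of_pos hξ0 _).ne'
        field_simp
      rw [hnum, hrhs]
      have hden : (0:ℝ) < |ξ| ^ 2 := by positivity
      have hstep : |Real.sin ((t + h) * |ξ|) - Real.sin (t * |ξ|)| ^ 2 / |ξ| ^ 2
          ≤ 4 * min 1 (x ^ 2) / |ξ| ^ 2 := div_le_div_of_nonneg_right hnum_le hden.le
      exact mul_le_mul_of_nonneg_right hstep (Real.rpow_nonneg (abs_nonneg _) _)
  -- scaled integrand
  have hGint : Integrable (fun ξ : ℝ => 4 * h ^ (2 - α) * g (h * ξ)) :=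
    (hgint.comp_mul_left' hh.ne').const_mul _
  have hGval : (∫ ξ : ℝ, 4 * h ^ (2 - α) * g (h * ξ)) = 4 * I * h ^ (1 - α) := by
    rw [integral_const_mul, Measure.integral_comp_mul_left g h, smul_eq_mul,
      abs_of_pos (inv_pos.mpr hh)]
    have hkey : h ^ (2 - α) * h⁻¹ = h ^ (1 - α) := by
      rw [← Real.rpow_neg_one h, ← Real.rpow_add hh]
      congr 1
      ring
    rw [← hIdef]
    calc 4 * h ^ (2 - α) * (h⁻¹ * I) = 4 * I * (h ^ (2 - α) * h⁻¹) := by ring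
      _ = 4 * I * h ^ (1 - α) := by rw [hkey]
  have hFbound : ∀ t : ℝ,
      (∫ ξ : ℝ, (abs (Real.sin ((t + h) * |ξ|) / |ξ| - Real.sin (t * |ξ|) / |ξ|)) ^ 2 * |ξ| ^ α)
        ≤ 4 * I * h ^ (1 - α) := by
    intro t
    rw [← hGval]
    refine integral_mono_of_nonneg ?_ hGint ?_
    · exact Filter.Eventually.of_forall fun ξ => by positivity
    · exact Filter.Eventually.of_forall (hpt t)
  have hC0 : 0 ≤ 4 * I * h ^ (1 - α) := by positivity
  set F : ℝ → ℝ := fun t =>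
    ∫ ξ : ℝ, (abs (Real.sin ((t + h) * |ξ|) / |ξ| - Real.sin (t * |ξ|) / |ξ|)) ^ 2 * |ξ| ^ α
    with hFdef
  show (∫ t in Ioc 0 T, F t) ≤ 4 * I * T * h ^ (1 - α)
  by_cases hFi : IntegrableOn F (Ioc 0 T)
  · have hconst : IntegrableOn (fun _ : ℝ => 4 * I * h ^ (1 - α)) (Ioc 0 T) := by
      refine (integrableOn_const_iff).mpr (Or.inr ?_)
      rw [Real.volume_Ioc]
      exact ENNReal.ofReal_lt_top
    have hmono := setIntegral_mono_on hFi hconst measurableSet_Ioc (fun t _ => hFbound t)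
    have hval : (∫ _ in Ioc 0 T, 4 * I * h ^ (1 - α)) = T * (4 * I * h ^ (1 - α)) := by
      rw [setIntegral_const, Real.volume_real_Ioc_of_le hT.le, smul_eq_mul]
      ring
    rw [hval] at hmono
    linarith
  · rw [integral_undef hFi]
    have : 0 ≤ 4 * I * T * h ^ (1 - α) := by positivity
    linarith
end

section
/- Existence, uniqueness, and continuity of the solution operator for the deterministic wave integral equation: For every continuous function η ∈ C([0,T]×ℝ) and every Lipschitz continuous b: ℝ → ℝ, the equation z(t,x) = (1/2)∫₀^t ∫_{x−t+s}^{x+t−s} b(z(s,y)) dy ds + η(t,x) has a unique solution z ∈ C([0,T]×ℝ). Moreover the solution operator F: C([0,T]×ℝ) → C([0,T]×ℝ), F(η) = z, is continuous with respect to the topology of uniform convergence on compact sets. -/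
open MeasureTheory Real Set
set_option maxHeartbeats 1000000

namespace WaveAux

open Filter Topology

variable {T L : ℝ} {b : ℝ → ℝ}

/-- Clamping retraction onto the trapezoid `D T R`. -/
noncomputable def rho (T R : ℝ) : C(Set.Icc (0 : ℝ) T × ℝ, Set.Icc (0 : ℝ) T × ℝ) :=
  ⟨fun p => (p.1, max (-(R + T - (p.1 : ℝ))) (min p.2 (R + T - (p.1 : ℝ)))), by fun_prop⟩

/-- Trapezoidal domain of dependence. -/
def D (T R : ℝ) : Set (Set.Icc (0 : ℝ) T × ℝ) := {p | |p.2| ≤ R + T - (p.1 : ℝ)}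

lemma rho_mem {R : ℝ} (hR : 0 ≤ R) (p : Set.Icc (0 : ℝ) T × ℝ) : rho T R p ∈ D T R := by
  have h1 : (p.1 : ℝ) ≤ T := p.1.2.2
  have h2 : 0 ≤ R + T - (p.1 : ℝ) := by linarith
  show |max (-(R + T - (p.1 : ℝ))) (min p.2 (R + T - (p.1 : ℝ)))| ≤ R + T - (p.1 : ℝ)
  rw [abs_le]
  constructor
  · exact le_max_left _ _
  · exact max_le (by linarith) (min_le_right _ _)

lemma rho_eq_self {R : ℝ} {p : Set.Icc (0 : ℝ) T × ℝ} (hp : p ∈ D T R) : rho T R p = p := by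
  have h := abs_le.mp (show |(p.2 : ℝ)| ≤ R + T - (p.1 : ℝ) from hp)
  show (p.1, _) = p
  have : max (-(R + T - (p.1 : ℝ))) (min p.2 (R + T - (p.1 : ℝ))) = p.2 := by
    rw [min_eq_left h.2, max_eq_right h.1]
  rw [this]

lemma rho_idem {R : ℝ} (hR : 0 ≤ R) (p : Set.Icc (0 : ℝ) T × ℝ) :
    rho T R (rho T R p) = rho T R p := rho_eq_self (rho_mem hR p)

lemma isCompact_D (h0T : 0 ≤ T) (R : ℝ) : IsCompact (D T R) := by
  have hclosed : IsClosed (D T R) := by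
    apply isClosed_le (by fun_prop) (by fun_prop)
  have hsub : D T R ⊆ (univ : Set (Set.Icc (0 : ℝ) T)) ×ˢ Set.Icc (-(R + T)) (R + T) := by
    intro p hp
    refine ⟨trivial, ?_⟩
    have h1 : (0 : ℝ) ≤ p.1 := p.1.2.1
    have h2 := abs_le.mp (show |(p.2 : ℝ)| ≤ R + T - (p.1 : ℝ) from hp)
    exact ⟨by linarith [h2.1], by linarith [h2.2]⟩
  exact (isCompact_univ.prod isCompact_Icc).of_isClosed_subset hclosed hsub

/-- Double wave integral operator. -/
noncomputable def intOp (g : ℝ × ℝ → ℝ) (p : Set.Icc (0 : ℝ) T × ℝ) : ℝ :=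
  ∫ s in (0 : ℝ)..(p.1 : ℝ),
    ∫ y in ((p.2 : ℝ) - (p.1 : ℝ) + s)..((p.2 : ℝ) + (p.1 : ℝ) - s), g (s, y)

lemma cont_inner {P : Type*} [TopologicalSpace P] {g : ℝ × ℝ → ℝ} (hg : Continuous g)
    {α β γ : P → ℝ} (hα : Continuous α) (hβ : Continuous β) (hγ : Continuous γ) :
    Continuous fun r => ∫ y in α r..β r, g (γ r, y) := by
  have h0 : ∀ δ : P → ℝ, Continuous δ → Continuous fun r => ∫ y in (0 : ℝ)..δ r, g (γ r, y) := by
    intro δ hδ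
    exact intervalIntegral.continuous_parametric_intervalIntegral_of_continuous
      (f := fun r y => g (γ r, y)) (hg.comp ((hγ.comp continuous_fst).prodMk continuous_snd)) hδ
  have key : ∀ r, (∫ y in α r..β r, g (γ r, y)) =
      (∫ y in (0 : ℝ)..β r, g (γ r, y)) - ∫ y in (0 : ℝ)..α r, g (γ r, y) := by
    intro r
    rw [intervalIntegral.integral_interval_sub_left (f := fun y => g (γ r, y))
      (Continuous.intervalIntegrable (by fun_prop) _ _)
      (Continuous.intervalIntegrable (by fun_prop) _ _)]
  simp only [key]
  exact (h0 β hβ).sub (h0 α hα)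

lemma cont_intOp {g : ℝ × ℝ → ℝ} (hg : Continuous g) :
    Continuous fun p : Set.Icc (0 : ℝ) T × ℝ => intOp g p := by
  unfold intOp
  apply intervalIntegral.continuous_parametric_intervalIntegral_of_continuous
    (f := fun (p : Set.Icc (0 : ℝ) T × ℝ) (s : ℝ) =>
      ∫ y in ((p.2 : ℝ) - (p.1 : ℝ) + s)..((p.2 : ℝ) + (p.1 : ℝ) - s), g (s, y))
  · exact cont_inner hg
      (α := fun q : (Set.Icc (0 : ℝ) T × ℝ) × ℝ => (q.1.2 : ℝ) - (q.1.1 : ℝ) + q.2)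
      (β := fun q => (q.1.2 : ℝ) + (q.1.1 : ℝ) - q.2) (γ := Prod.snd)
      (by fun_prop) (by fun_prop) continuous_snd
  · fun_prop

/-- Integrand built from `b` and a continuous function `u`. -/
noncomputable def gOf (h0T : (0 : ℝ) ≤ T) (b : ℝ → ℝ) (u : C(Set.Icc (0 : ℝ) T × ℝ, ℝ)) :
    ℝ × ℝ → ℝ := fun q => b (u (Set.projIcc 0 T h0T q.1, q.2))

lemma cont_gOf (h0T : (0 : ℝ) ≤ T) (hb : Continuous b) (u : C(Set.Icc (0 : ℝ) T × ℝ, ℝ)) :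
    Continuous (gOf h0T b u) :=
  hb.comp (u.continuous.comp ((continuous_projIcc.comp continuous_fst).prodMk continuous_snd))

/-- The (clamped) Picard operator. -/
noncomputable def Phi (h0T : (0 : ℝ) ≤ T) (b : ℝ → ℝ) (hb : Continuous b) (R : ℝ)
    (η u : C(Set.Icc (0 : ℝ) T × ℝ, ℝ)) : C(Set.Icc (0 : ℝ) T × ℝ, ℝ) :=
  ⟨fun p => (1 / 2) * intOp (gOf h0T b (u.comp (rho T R))) p + η p,
    ((continuous_const.mul (cont_intOp (cont_gOf h0T hb _))).add η.continuous)⟩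

lemma Phi_apply (h0T : (0 : ℝ) ≤ T) (hb : Continuous b) (R : ℝ)
    (η u : C(Set.Icc (0 : ℝ) T × ℝ, ℝ)) (p) :
    Phi h0T b hb R η u p = (1 / 2) * intOp (gOf h0T b (u.comp (rho T R))) p + η p := rfl

lemma intOp_congr {g₁ g₂ : ℝ × ℝ → ℝ} (p : Set.Icc (0 : ℝ) T × ℝ)
    (h : ∀ s ∈ Set.Icc (0 : ℝ) (p.1 : ℝ),
      ∀ y ∈ Set.Icc ((p.2 : ℝ) - (p.1 : ℝ) + s) ((p.2 : ℝ) + (p.1 : ℝ) - s), g₁ (s, y) = g₂ (s, y)) :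
    intOp g₁ p = intOp g₂ p := by
  unfold intOp
  apply intervalIntegral.integral_congr
  intro s hs
  rw [uIcc_of_le p.1.2.1] at hs
  apply intervalIntegral.integral_congr
  intro y hy
  rw [uIcc_of_le (by linarith [hs.1, hs.2] : (p.2 : ℝ) - (p.1 : ℝ) + s ≤ (p.2 : ℝ) + (p.1 : ℝ) - s)] at hy
  exact h s hs y hy

lemma intOp_sub {g₁ g₂ : ℝ × ℝ → ℝ} (h₁ : Continuous g₁) (h₂ : Continuous g₂)
    (p : Set.Icc (0 : ℝ) T × ℝ) :
    intOp g₁ p - intOp g₂ p = intOp (fun v => g₁ v - g₂ v) p := by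
  unfold intOp
  have I : ∀ g : ℝ × ℝ → ℝ, Continuous g → IntervalIntegrable
      (fun s => ∫ y in ((p.2 : ℝ) - (p.1 : ℝ) + s)..((p.2 : ℝ) + (p.1 : ℝ) - s), g (s, y))
      volume 0 (p.1 : ℝ) := by
    intro g hg
    exact (cont_inner hg (by fun_prop) (by fun_prop) continuous_id).intervalIntegrable _ _
  rw [← intervalIntegral.integral_sub (I g₁ h₁) (I g₂ h₂)]
  apply intervalIntegral.integral_congr
  intro s _
  exact (intervalIntegral.integral_sub
    ((h₁.comp (continuous_const.prodMk continuous_id)).intervalIntegrable _ _)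
    ((h₂.comp (continuous_const.prodMk continuous_id)).intervalIntegrable _ _)).symm

lemma intOp_bound (h0T : (0 : ℝ) ≤ T) {h : ℝ × ℝ → ℝ} (hh : Continuous h) {φ : ℝ → ℝ}
    (hφ : Continuous φ) (q : Set.Icc (0 : ℝ) T × ℝ)
    (hφ0 : ∀ s ∈ Set.Icc (0 : ℝ) (q.1 : ℝ), 0 ≤ φ s)
    (hbd : ∀ s ∈ Set.Icc (0 : ℝ) (q.1 : ℝ),
      ∀ y ∈ Set.Icc ((q.2 : ℝ) - (q.1 : ℝ) + s) ((q.2 : ℝ) + (q.1 : ℝ) - s), |h (s, y)| ≤ φ s) :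
    |intOp h q| ≤ 2 * T * ∫ s in (0 : ℝ)..(q.1 : ℝ), φ s := by
  have ht0 : (0 : ℝ) ≤ (q.1 : ℝ) := q.1.2.1
  have htT : (q.1 : ℝ) ≤ T := q.1.2.2
  set t := (q.1 : ℝ)
  set x := (q.2 : ℝ)
  have key : ∀ s ∈ Set.uIoc (0 : ℝ) t, ‖∫ y in (x - t + s)..(x + t - s), h (s, y)‖ ≤ 2 * T * φ s := by
    intro s hs
    rw [uIoc_of_le ht0] at hs
    have hs' : s ∈ Set.Icc (0 : ℝ) t := ⟨hs.1.le, hs.2⟩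
    have hab : x - t + s ≤ x + t - s := by linarith [hs.1.le, hs.2]
    have h1 : ‖∫ y in (x - t + s)..(x + t - s), h (s, y)‖ ≤ φ s * |(x + t - s) - (x - t + s)| := by
      apply intervalIntegral.norm_integral_le_of_norm_le_const
      intro y hy
      rw [uIoc_of_le hab] at hy
      rw [Real.norm_eq_abs]
      exact hbd s hs' y ⟨hy.1.le, hy.2⟩
    have h2 : |(x + t - s) - (x - t + s)| = 2 * (t - s) := by
      rw [abs_of_nonneg (by linarith [hs.2])]; ring
    calc ‖∫ y in (x - t + s)..(x + t - s), h (s, y)‖ ≤ φ s * (2 * (t - s)) := by rwa [h2] at h1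
      _ ≤ φ s * (2 * T) := by
          apply mul_le_mul_of_nonneg_left (by linarith [hs.1.le]) (hφ0 s hs')
      _ = 2 * T * φ s := by ring
  have hInt : IntervalIntegrable (fun s => 2 * T * φ s) volume 0 t :=
    (continuous_const.mul hφ).intervalIntegrable _ _
  have h3 : ‖intOp h q‖ ≤ |∫ s in (0 : ℝ)..t, 2 * T * φ s| := by
    apply intervalIntegral.norm_integral_le_abs_of_norm_le _ hInt
    exact ((ae_restrict_iff' measurableSet_uIoc).2 (Filter.Eventually.of_forall key))
  have h4 : (0 : ℝ) ≤ ∫ s in (0 : ℝ)..t, 2 * T * φ s := by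
    apply intervalIntegral.integral_nonneg ht0
    intro s hs
    exact mul_nonneg (by linarith) (hφ0 s hs)
  rw [Real.norm_eq_abs] at h3
  calc |intOp h q| ≤ |∫ s in (0 : ℝ)..t, 2 * T * φ s| := h3
    _ = ∫ s in (0 : ℝ)..t, 2 * T * φ s := abs_of_nonneg h4
    _ = 2 * T * ∫ s in (0 : ℝ)..t, φ s := intervalIntegral.integral_const_mul _ _

lemma coe_projIcc_of_mem (h0T : (0 : ℝ) ≤ T) {s : ℝ} (h0s : 0 ≤ s) (hsT : s ≤ T) :
    ((Set.projIcc 0 T h0T s : Set.Icc (0 : ℝ) T) : ℝ) = s := by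
  rw [Set.coe_projIcc, min_eq_right hsT, max_eq_right h0s]

lemma cone_mem (h0T : (0 : ℝ) ≤ T) {R : ℝ} {q : Set.Icc (0 : ℝ) T × ℝ} (hq : q ∈ D T R)
    {s y : ℝ} (hs : s ∈ Set.Icc (0 : ℝ) (q.1 : ℝ))
    (hy : y ∈ Set.Icc ((q.2 : ℝ) - (q.1 : ℝ) + s) ((q.2 : ℝ) + (q.1 : ℝ) - s)) :
    ((Set.projIcc 0 T h0T s, y) : Set.Icc (0 : ℝ) T × ℝ) ∈ D T R := by
  have hsT : s ≤ T := le_trans hs.2 q.1.2.2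
  show |y| ≤ R + T - ((Set.projIcc 0 T h0T s : Set.Icc (0 : ℝ) T) : ℝ)
  rw [coe_projIcc_of_mem h0T hs.1 hsT]
  have habs : |y - (q.2 : ℝ)| ≤ (q.1 : ℝ) - s :=
    abs_le.mpr ⟨by linarith [hy.1], by linarith [hy.2]⟩
  have hq' : |(q.2 : ℝ)| ≤ R + T - (q.1 : ℝ) := hq
  calc |y| = |(q.2 : ℝ) + (y - (q.2 : ℝ))| := by ring_nf
    _ ≤ |(q.2 : ℝ)| + |y - (q.2 : ℝ)| := abs_add_le _ _
    _ ≤ (R + T - (q.1 : ℝ)) + ((q.1 : ℝ) - s) := add_le_add hq' habs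
    _ = R + T - s := by ring

lemma intOp_gOf_congr (h0T : (0 : ℝ) ≤ T) (b : ℝ → ℝ) {R : ℝ}
    (u₁ u₂ : C(Set.Icc (0 : ℝ) T × ℝ, ℝ)) {q : Set.Icc (0 : ℝ) T × ℝ} (hq : q ∈ D T R)
    (h : ∀ p ∈ D T R, u₁ p = u₂ p) :
    intOp (gOf h0T b u₁) q = intOp (gOf h0T b u₂) q :=
  intOp_congr q fun s hs y hy => congrArg b (h _ (cone_mem h0T hq hs hy))

lemma Phi_apply_true (h0T : (0 : ℝ) ≤ T) (hb : Continuous b) {R : ℝ} (hR : 0 ≤ R)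
    (η u : C(Set.Icc (0 : ℝ) T × ℝ, ℝ)) {q : Set.Icc (0 : ℝ) T × ℝ} (hq : q ∈ D T R) :
    Phi h0T b hb R η u q = (1 / 2) * intOp (gOf h0T b u) q + η q := by
  rw [Phi_apply]
  congr 2
  exact intOp_gOf_congr h0T b (u.comp (rho T R)) u hq
    (fun p hp => congrArg u (rho_eq_self hp))

lemma iter_est (h0T : (0 : ℝ) ≤ T) (hb : Continuous b) (hL : 0 ≤ L)
    (hbLip : ∀ x y, |b x - b y| ≤ L * |x - y|) {R : ℝ} (hR : 0 ≤ R)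
    (η w₁ w₂ : C(Set.Icc (0 : ℝ) T × ℝ, ℝ)) {C : ℝ} (hC0 : 0 ≤ C)
    (hC : ∀ q, |w₁ q - w₂ q| ≤ C) (m : ℕ) :
    ∀ q : Set.Icc (0 : ℝ) T × ℝ,
      |((Phi h0T b hb R η)^[m] w₁) q - ((Phi h0T b hb R η)^[m] w₂) q| ≤
        (L * T) ^ m * (q.1 : ℝ) ^ m / m.factorial * C := by
  induction m with
  | zero => intro q; simpa using hC q
  | succ m ih =>
    intro q
    rw [Function.iterate_succ_apply', Function.iterate_succ_apply']
    set v₁ := (Phi h0T b hb R η)^[m] w₁ with hv₁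
    set v₂ := (Phi h0T b hb R η)^[m] w₂ with hv₂
    have ht0 : (0 : ℝ) ≤ (q.1 : ℝ) := q.1.2.1
    have htT : (q.1 : ℝ) ≤ T := q.1.2.2
    have hg₁ : Continuous (gOf h0T b (v₁.comp (rho T R))) := cont_gOf h0T hb _
    have hg₂ : Continuous (gOf h0T b (v₂.comp (rho T R))) := cont_gOf h0T hb _
    have hdiff : Phi h0T b hb R η v₁ q - Phi h0T b hb R η v₂ q =
        (1 / 2) * (intOp (gOf h0T b (v₁.comp (rho T R))) q -
          intOp (gOf h0T b (v₂.comp (rho T R))) q) := by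
      rw [Phi_apply, Phi_apply]; ring
    rw [hdiff, intOp_sub hg₁ hg₂, abs_mul, abs_of_nonneg (by norm_num : (0:ℝ) ≤ 1/2)]
    set Kc : ℝ := L * ((L * T) ^ m / m.factorial * C) with hKc
    have hKc0 : 0 ≤ Kc := by positivity
    have hbd : ∀ s ∈ Set.Icc (0 : ℝ) (q.1 : ℝ),
        ∀ y ∈ Set.Icc ((q.2 : ℝ) - (q.1 : ℝ) + s) ((q.2 : ℝ) + (q.1 : ℝ) - s),
        |(fun v => gOf h0T b (v₁.comp (rho T R)) v - gOf h0T b (v₂.comp (rho T R)) v) (s, y)| ≤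
          Kc * s ^ m := by
      intro s hs y _
      have hsT : s ≤ T := le_trans hs.2 htT
      set q' := rho T R (Set.projIcc 0 T h0T s, y) with hq'
      have hq'1 : ((q'.1 : ℝ)) = s := by
        show ((Set.projIcc 0 T h0T s : Set.Icc (0 : ℝ) T) : ℝ) = s
        exact coe_projIcc_of_mem h0T hs.1 hsT
      have step1 : |b (v₁ q') - b (v₂ q')| ≤ L * |v₁ q' - v₂ q'| := hbLip _ _
      have step2 : |v₁ q' - v₂ q'| ≤ (L * T) ^ m * s ^ m / m.factorial * C := by
        have := ih q'
        rwa [hq'1] at this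
      calc |(fun v => gOf h0T b (v₁.comp (rho T R)) v - gOf h0T b (v₂.comp (rho T R)) v) (s, y)|
          = |b (v₁ q') - b (v₂ q')| := rfl
        _ ≤ L * |v₁ q' - v₂ q'| := step1
        _ ≤ L * ((L * T) ^ m * s ^ m / m.factorial * C) :=
            mul_le_mul_of_nonneg_left step2 hL
        _ = Kc * s ^ m := by rw [hKc]; ring
    have hEst := intOp_bound h0T (hg₁.sub hg₂) (φ := fun s => Kc * s ^ m)
      (by fun_prop) q (fun s hs => by have h0s := hs.1; positivity) hbd
    have hIntVal : (∫ s in (0 : ℝ)..(q.1 : ℝ), Kc * s ^ m) =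
        Kc * ((q.1 : ℝ) ^ (m + 1) / (m + 1)) := by
      rw [intervalIntegral.integral_const_mul, integral_pow]
      norm_num
    have hfacpos : (0 : ℝ) < m.factorial := by exact_mod_cast m.factorial_pos
    calc (1 / 2) * |intOp (fun v => gOf h0T b (v₁.comp (rho T R)) v -
            gOf h0T b (v₂.comp (rho T R)) v) q|
        ≤ (1 / 2) * (2 * T * ∫ s in (0 : ℝ)..(q.1 : ℝ), Kc * s ^ m) := by
          apply mul_le_mul_of_nonneg_left hEst (by norm_num)
      _ = (L * T) ^ (m + 1) * (q.1 : ℝ) ^ (m + 1) / (m + 1).factorial * C := by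
          rw [hIntVal, hKc, Nat.factorial_succ]
          push_cast
          field_simp
          ring

lemma local_theory (hT : 0 < T) (hb : Continuous b) (hL : 0 ≤ L)
    (hbLip : ∀ x y, |b x - b y| ≤ L * |x - y|) (R : ℝ) (hR : 0 ≤ R) :
    ∃ sol : C(Set.Icc (0 : ℝ) T × ℝ, ℝ) → C(Set.Icc (0 : ℝ) T × ℝ, ℝ),
      (∀ η, Phi hT.le b hb R η (sol η) = sol η) ∧
      (∀ η u', (∀ q ∈ D T R, u' q = Phi hT.le b hb R η u' q) →
        ∀ q ∈ D T R, u' q = sol η q) ∧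
      ∃ A : ℝ, 0 ≤ A ∧
        (∀ η₁ η₂ δ, 0 ≤ δ → (∀ q ∈ D T R, |η₁ q - η₂ q| ≤ δ) →
          ∀ q ∈ D T R, |sol η₁ q - sol η₂ q| ≤ A * δ) := by
  haveI hcs : CompactSpace (D T R) := isCompact_iff_compactSpace.mp (isCompact_D hT.le R)
  haveI hne : Nonempty (D T R) := by
    refine ⟨⟨(⟨0, le_refl 0, hT.le⟩, 0), ?_⟩⟩
    show |(0 : ℝ)| ≤ R + T - (0 : ℝ)
    simp
    linarith
  let eD : C(Set.Icc (0 : ℝ) T × ℝ, D T R) := ⟨fun p => ⟨rho T R p, rho_mem hR p⟩,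
    ((map_continuous (rho T R)).subtype_mk _)⟩
  let ext : C(↥(D T R), ℝ) → C(Set.Icc (0 : ℝ) T × ℝ, ℝ) := fun w => w.comp eD
  let res : C(Set.Icc (0 : ℝ) T × ℝ, ℝ) → C(↥(D T R), ℝ) := fun u => u.restrict (D T R)
  have hres_ext : ∀ w, res (ext w) = w := by
    intro w
    apply ContinuousMap.ext
    intro x
    show w ⟨rho T R x.val, _⟩ = w x
    congr 1
    exact Subtype.ext (rho_eq_self x.2)
  have hPhicongr : ∀ (η u₁ u₂ : C(Set.Icc (0 : ℝ) T × ℝ, ℝ)), u₁.comp (rho T R) = u₂.comp (rho T R) →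
      Phi hT.le b hb R η u₁ = Phi hT.le b hb R η u₂ := by
    intro η u₁ u₂ h
    apply ContinuousMap.ext
    intro p
    rw [Phi_apply, Phi_apply, h]
  have hext_res : ∀ u : C(Set.Icc (0 : ℝ) T × ℝ, ℝ), (ext (res u)).comp (rho T R) = u.comp (rho T R) := by
    intro u
    apply ContinuousMap.ext
    intro p
    exact congrArg u (rho_idem hR p)
  have hPhi_rho : ∀ η u, Phi hT.le b hb R η (ext (res u)) = Phi hT.le b hb R η u :=
    fun η u => hPhicongr η _ _ (hext_res u)
  set Φ' : C(Set.Icc (0 : ℝ) T × ℝ, ℝ) → C(↥(D T R), ℝ) → C(↥(D T R), ℝ) :=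
    fun η w => res (Phi hT.le b hb R η (ext w)) with hΦ'
  have hcomm : ∀ η u, Φ' η (res u) = res (Phi hT.le b hb R η u) := by
    intro η u
    show res (Phi hT.le b hb R η (ext (res u))) = res (Phi hT.le b hb R η u)
    rw [hPhi_rho]
  have hiter : ∀ η u (k : ℕ), (Φ' η)^[k] (res u) = res ((Phi hT.le b hb R η)^[k] u) := by
    intro η u k
    induction k with
    | zero => rfl
    | succ k ihk =>
      rw [Function.iterate_succ_apply', Function.iterate_succ_apply', ihk, hcomm]
  have hdist : ∀ (k : ℕ) η (w₁ w₂ : C(↥(D T R), ℝ)),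
      dist ((Φ' η)^[k] w₁) ((Φ' η)^[k] w₂) ≤ ((L * T * T) ^ k / k.factorial) * dist w₁ w₂ := by
    intro k η w₁ w₂
    have hd0 : (0 : ℝ) ≤ dist w₁ w₂ := dist_nonneg
    rw [ContinuousMap.dist_le (by positivity)]
    intro x
    have h1 : (Φ' η)^[k] w₁ = res ((Phi hT.le b hb R η)^[k] (ext w₁)) := by
      rw [← hiter, hres_ext]
    have h2 : (Φ' η)^[k] w₂ = res ((Phi hT.le b hb R η)^[k] (ext w₂)) := by
      rw [← hiter, hres_ext]
    have hCbd : ∀ p : Set.Icc (0 : ℝ) T × ℝ, |ext w₁ p - ext w₂ p| ≤ dist w₁ w₂ := by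
      intro p
      have := ContinuousMap.dist_apply_le_dist (f := w₁) (g := w₂) (eD p)
      rwa [Real.dist_eq] at this
    have hest := iter_est hT.le hb hL hbLip hR η (ext w₁) (ext w₂) hd0 hCbd k (x : Set.Icc (0 : ℝ) T × ℝ)
    rw [h1, h2]
    show dist ((Phi hT.le b hb R η)^[k] (ext w₁) (x : Set.Icc (0 : ℝ) T × ℝ))
        ((Phi hT.le b hb R η)^[k] (ext w₂) (x : Set.Icc (0 : ℝ) T × ℝ)) ≤ _
    rw [Real.dist_eq]
    refine hest.trans ?_
    have ht0 : (0 : ℝ) ≤ ((x : Set.Icc (0 : ℝ) T × ℝ).1 : ℝ) := (x : Set.Icc (0 : ℝ) T × ℝ).1.2.1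
    have htT : ((x : Set.Icc (0 : ℝ) T × ℝ).1 : ℝ) ≤ T := (x : Set.Icc (0 : ℝ) T × ℝ).1.2.2
    have hpow : (L * T) ^ k * ((x : Set.Icc (0 : ℝ) T × ℝ).1 : ℝ) ^ k ≤ (L * T * T) ^ k := by
      rw [← mul_pow]
      apply pow_le_pow_left₀ (mul_nonneg (mul_nonneg hL hT.le) ht0)
      nlinarith [mul_nonneg (mul_nonneg hL hT.le) (sub_nonneg.mpr htT)]
    have hfac : (0 : ℝ) < (k.factorial : ℝ) := by exact_mod_cast k.factorial_pos
    calc (L * T) ^ k * ((x : Set.Icc (0 : ℝ) T × ℝ).1 : ℝ) ^ k / k.factorial * dist w₁ w₂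
        = ((L * T) ^ k * ((x : Set.Icc (0 : ℝ) T × ℝ).1 : ℝ) ^ k) * (dist w₁ w₂ / k.factorial) := by ring
      _ ≤ (L * T * T) ^ k * (dist w₁ w₂ / k.factorial) :=
          mul_le_mul_of_nonneg_right hpow (div_nonneg hd0 hfac.le)
      _ = (L * T * T) ^ k / k.factorial * dist w₁ w₂ := by ring
  obtain ⟨m, hm⟩ : ∃ m : ℕ, (L * T * T) ^ m / m.factorial < 1 :=
    ((FloorSemiring.tendsto_pow_div_factorial_atTop (K := ℝ) (L * T * T)).eventually
      (gt_mem_nhds one_pos)).exists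
  have hκ0 : 0 ≤ (L * T * T) ^ m / m.factorial := by positivity
  set K : NNReal := ⟨(L * T * T) ^ m / m.factorial, hκ0⟩ with hK
  have hKlt : K < 1 := by
    rw [← NNReal.coe_lt_coe]
    exact hm
  have hcontr : ∀ η, ContractingWith K ((Φ' η)^[m]) := by
    intro η
    exact ⟨hKlt, LipschitzWith.of_dist_le_mul (fun w₁ w₂ => hdist m η w₁ w₂)⟩
  let sol0 : C(Set.Icc (0 : ℝ) T × ℝ, ℝ) → C(↥(D T R), ℝ) := fun η => (hcontr η).fixedPoint ((Φ' η)^[m])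
  have hfix' : ∀ η, Φ' η (sol0 η) = sol0 η := fun η => (hcontr η).isFixedPt_fixedPoint_iterate
  have hfix0 : ∀ η, Function.IsFixedPt ((Φ' η)^[m]) (sol0 η) :=
    fun η => (hcontr η).fixedPoint_isFixedPt
  let sol : C(Set.Icc (0 : ℝ) T × ℝ, ℝ) → C(Set.Icc (0 : ℝ) T × ℝ, ℝ) := fun η => Phi hT.le b hb R η (ext (sol0 η))
  have hres_sol : ∀ η, res (sol η) = sol0 η := by
    intro η
    show Φ' η (sol0 η) = sol0 η
    exact hfix' η
  have hfix : ∀ η, Phi hT.le b hb R η (sol η) = sol η := by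
    intro η
    calc Phi hT.le b hb R η (sol η) = Phi hT.le b hb R η (ext (res (sol η))) :=
          (hPhi_rho η (sol η)).symm
      _ = Phi hT.le b hb R η (ext (sol0 η)) := by rw [hres_sol]
      _ = sol η := rfl
  have huniq : ∀ η u', (∀ q ∈ D T R, u' q = Phi hT.le b hb R η u' q) →
      ∀ q ∈ D T R, u' q = sol η q := by
    intro η u' hu' q hq
    have h1 : Φ' η (res u') = res u' := by
      apply ContinuousMap.ext
      intro x
      have : Phi hT.le b hb R η (ext (res u')) x.val = u' x.val := by
        rw [hPhi_rho]
        exact (hu' x.val x.2).symm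
      exact this
    have h1' : Function.IsFixedPt (Φ' η) (res u') := h1
    have h2 : res u' = sol0 η :=
      (hcontr η).fixedPoint_unique' (h1'.iterate m) (hfix0 η)
    calc u' q = res u' ⟨q, hq⟩ := (u'.restrict_apply (D T R) ⟨q, hq⟩).symm
      _ = sol0 η ⟨q, hq⟩ := DFunLike.congr_fun h2 ⟨q, hq⟩
      _ = res (sol η) ⟨q, hq⟩ := (DFunLike.congr_fun (hres_sol η) ⟨q, hq⟩).symm
      _ = sol η q := (sol η).restrict_apply (D T R) ⟨q, hq⟩
  have hshift : ∀ η₁ η₂ δ, 0 ≤ δ → (∀ q ∈ D T R, |η₁ q - η₂ q| ≤ δ) →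
      ∀ z, dist (Φ' η₁ z) (Φ' η₂ z) ≤ δ := by
    intro η₁ η₂ δ hδ0 hδ z
    rw [ContinuousMap.dist_le hδ0]
    intro x
    show dist (Phi hT.le b hb R η₁ (ext z) x.val) (Phi hT.le b hb R η₂ (ext z) x.val) ≤ δ
    rw [Real.dist_eq, Phi_apply, Phi_apply]
    have heq : (1/2) * intOp (gOf hT.le b ((ext z).comp (rho T R))) x.val + η₁ x.val -
        ((1/2) * intOp (gOf hT.le b ((ext z).comp (rho T R))) x.val + η₂ x.val) =
        η₁ x.val - η₂ x.val := by ring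
    rw [heq]
    exact hδ x.val x.2
  have hLip1 : ∀ η (z₁ z₂ : C(↥(D T R), ℝ)),
      dist (Φ' η z₁) (Φ' η z₂) ≤ (L * T * T) * dist z₁ z₂ := by
    intro η z₁ z₂
    have := hdist 1 η z₁ z₂
    simpa using this
  have hiterdiff : ∀ η₁ η₂ δ, 0 ≤ δ → (∀ q ∈ D T R, |η₁ q - η₂ q| ≤ δ) →
      ∀ (z : C(↥(D T R), ℝ)) (k : ℕ),
      dist ((Φ' η₁)^[k] z) ((Φ' η₂)^[k] z) ≤ (∑ i ∈ Finset.range k, (L * T * T) ^ i) * δ := by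
    intro η₁ η₂ δ hδ0 hδ z k
    induction k with
    | zero => simp
    | succ k ihk =>
      rw [Function.iterate_succ_apply', Function.iterate_succ_apply']
      calc dist (Φ' η₁ ((Φ' η₁)^[k] z)) (Φ' η₂ ((Φ' η₂)^[k] z))
          ≤ dist (Φ' η₁ ((Φ' η₁)^[k] z)) (Φ' η₁ ((Φ' η₂)^[k] z)) +
            dist (Φ' η₁ ((Φ' η₂)^[k] z)) (Φ' η₂ ((Φ' η₂)^[k] z)) := dist_triangle _ _ _
        _ ≤ (L * T * T) * dist ((Φ' η₁)^[k] z) ((Φ' η₂)^[k] z) + δ :=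
            add_le_add (hLip1 _ _ _) (hshift η₁ η₂ δ hδ0 hδ _)
        _ ≤ (L * T * T) * ((∑ i ∈ Finset.range k, (L * T * T) ^ i) * δ) + δ := by
            have h0 : (0 : ℝ) ≤ L * T * T := by positivity
            exact add_le_add (mul_le_mul_of_nonneg_left ihk h0) le_rfl
        _ = (∑ i ∈ Finset.range (k + 1), (L * T * T) ^ i) * δ := by
            rw [geom_sum_succ]
            ring
  set S : ℝ := ∑ i ∈ Finset.range m, (L * T * T) ^ i with hS
  have hS0 : 0 ≤ S := Finset.sum_nonneg fun i _ => by positivity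
  have h1K : 0 < 1 - (K : ℝ) := by
    have hc : (K : ℝ) < 1 := hm
    linarith
  refine ⟨sol, hfix, huniq, S / (1 - (K : ℝ)), div_nonneg hS0 h1K.le, ?_⟩
  intro η₁ η₂ δ hδ0 hδ q hq
  have hfg : ∀ z, dist ((Φ' η₁)^[m] z) ((Φ' η₂)^[m] z) ≤ S * δ :=
    fun z => hiterdiff η₁ η₂ δ hδ0 hδ z m
  have hd : dist (sol0 η₁) (sol0 η₂) ≤ S * δ / (1 - (K : ℝ)) :=
    (hcontr η₁).dist_fixedPoint_fixedPoint_of_dist_le' ((Φ' η₂)^[m]) (hfix0 η₁) (hfix0 η₂) hfg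
  have hpt : |sol η₁ q - sol η₂ q| ≤ dist (sol0 η₁) (sol0 η₂) := by
    have h5 := ContinuousMap.dist_apply_le_dist (f := sol0 η₁) (g := sol0 η₂) ⟨q, hq⟩
    rw [Real.dist_eq] at h5
    have h6 := ContinuousMap.congr_fun (hres_sol η₁) ⟨q, hq⟩
    have h7 := ContinuousMap.congr_fun (hres_sol η₂) ⟨q, hq⟩
    rw [ContinuousMap.restrict_apply] at h6 h7
    rw [← h6, ← h7] at h5
    exact h5
  refine hpt.trans (hd.trans ?_)
  exact le_of_eq (by ring)

end WaveAux

theorem wave_solution_operator (T : ℝ) (hT : 0 < T) (b : ℝ → ℝ) (L : ℝ)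
    (hbLip : ∀ x y, |b x - b y| ≤ L * |x - y|) :
    ∃ F : C(Set.Icc (0 : ℝ) T × ℝ, ℝ) → C(Set.Icc (0 : ℝ) T × ℝ, ℝ),
      Continuous F ∧
      (∀ η : C(Set.Icc (0 : ℝ) T × ℝ, ℝ),
        (∀ p : Set.Icc (0 : ℝ) T × ℝ,
          (F η) p =
            (1 / 2) * (∫ s in (0 : ℝ)..(p.1 : ℝ),
              ∫ y in ((p.2 : ℝ) - (p.1 : ℝ) + s)..((p.2 : ℝ) + (p.1 : ℝ) - s),
                b ((F η) (Set.projIcc 0 T hT.le s, y))) + η p) ∧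
        (∀ z : C(Set.Icc (0 : ℝ) T × ℝ, ℝ),
          (∀ p : Set.Icc (0 : ℝ) T × ℝ,
            z p = (1 / 2) * (∫ s in (0 : ℝ)..(p.1 : ℝ),
              ∫ y in ((p.2 : ℝ) - (p.1 : ℝ) + s)..((p.2 : ℝ) + (p.1 : ℝ) - s),
                b (z (Set.projIcc 0 T hT.le s, y))) + η p) → z = F η)) := by
  classical
  set L' := max L 0 with hL'def
  have hL0 : 0 ≤ L' := le_max_right _ _
  have hbLip' : ∀ x y, |b x - b y| ≤ L' * |x - y| := fun x y =>
    (hbLip x y).trans (mul_le_mul_of_nonneg_right (le_max_left _ _) (abs_nonneg _))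
  have hb : Continuous b := by
    have hlip : LipschitzWith (Real.toNNReal L') b := by
      apply LipschitzWith.of_dist_le_mul
      intro x y
      rw [Real.dist_eq, Real.dist_eq, Real.coe_toNNReal _ hL0]
      exact hbLip' x y
    exact hlip.continuous
  have Hloc : ∀ R : ℝ, ∃ sol : C(Set.Icc (0 : ℝ) T × ℝ, ℝ) → C(Set.Icc (0 : ℝ) T × ℝ, ℝ),
      0 ≤ R →
      ((∀ η, WaveAux.Phi hT.le b hb R η (sol η) = sol η) ∧
      (∀ η u', (∀ q ∈ WaveAux.D T R, u' q = WaveAux.Phi hT.le b hb R η u' q) →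
        ∀ q ∈ WaveAux.D T R, u' q = sol η q) ∧
      ∃ A : ℝ, 0 ≤ A ∧
        (∀ η₁ η₂ δ, 0 ≤ δ → (∀ q ∈ WaveAux.D T R, |η₁ q - η₂ q| ≤ δ) →
          ∀ q ∈ WaveAux.D T R, |sol η₁ q - sol η₂ q| ≤ A * δ)) := by
    intro R
    by_cases hR : 0 ≤ R
    · obtain ⟨sol, h⟩ := WaveAux.local_theory hT hb hL0 hbLip' R hR
      exact ⟨sol, fun _ => h⟩
    · exact ⟨id, fun h => absurd h hR⟩
  choose sol hsol using Hloc
  have hfix : ∀ R (hR : 0 ≤ R) η, WaveAux.Phi hT.le b hb R η (sol R η) = sol R η :=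
    fun R hR η => ((hsol R hR).1 η)
  have huniq : ∀ R (hR : 0 ≤ R) η u',
      (∀ q ∈ WaveAux.D T R, u' q = WaveAux.Phi hT.le b hb R η u' q) →
      ∀ q ∈ WaveAux.D T R, u' q = sol R η q :=
    fun R hR => (hsol R hR).2.1
  have hmemD : ∀ p : Set.Icc (0 : ℝ) T × ℝ, p ∈ WaveAux.D T (|p.2|) := by
    intro p
    show |p.2| ≤ |p.2| + T - (p.1 : ℝ)
    have := p.1.2.2
    linarith
  have habs : ∀ p : Set.Icc (0 : ℝ) T × ℝ, (0 : ℝ) ≤ |p.2| := fun p => abs_nonneg _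
  -- consistency of local solutions
  have hcons : ∀ R R' (hR : 0 ≤ R), R ≤ R' → ∀ η, ∀ q ∈ WaveAux.D T R,
      sol R η q = sol R' η q := by
    intro R R' hR hRR' η q hq
    have hR' : 0 ≤ R' := hR.trans hRR'
    refine (huniq R hR η (sol R' η) ?_ q hq).symm
    intro p hp
    have hp' : p ∈ WaveAux.D T R' := by
      show |p.2| ≤ R' + T - (p.1 : ℝ)
      have h1 : |p.2| ≤ R + T - (p.1 : ℝ) := hp
      linarith
    calc sol R' η p = WaveAux.Phi hT.le b hb R' η (sol R' η) p :=
          (ContinuousMap.congr_fun (hfix R' hR' η) p).symm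
      _ = (1 / 2) * WaveAux.intOp (WaveAux.gOf hT.le b (sol R' η)) p + η p :=
          WaveAux.Phi_apply_true hT.le hb hR' η (sol R' η) hp'
      _ = WaveAux.Phi hT.le b hb R η (sol R' η) p :=
          (WaveAux.Phi_apply_true hT.le hb hR η (sol R' η) hp).symm
  -- glued solution
  have hcontF : ∀ η, Continuous (fun p : Set.Icc (0 : ℝ) T × ℝ => sol (|p.2|) η p) := by
    intro η
    rw [continuous_iff_continuousAt]
    intro p₀
    have hopen : IsOpen {p : Set.Icc (0 : ℝ) T × ℝ | |p.2| < |p₀.2| + 1} :=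
      isOpen_lt (by fun_prop) continuous_const
    have hmem : p₀ ∈ {p : Set.Icc (0 : ℝ) T × ℝ | |p.2| < |p₀.2| + 1} := by
      show |p₀.2| < |p₀.2| + 1
      linarith
    apply ContinuousAt.congr ((sol (|p₀.2| + 1) η).continuous.continuousAt)
    apply Filter.eventuallyEq_of_mem (hopen.mem_nhds hmem)
    intro p hp
    exact (hcons (|p.2|) (|p₀.2| + 1) (habs p) (le_of_lt hp) η p (hmemD p)).symm
  set F : C(Set.Icc (0 : ℝ) T × ℝ, ℝ) → C(Set.Icc (0 : ℝ) T × ℝ, ℝ) :=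
    fun η => ⟨fun p => sol (|p.2|) η p, hcontF η⟩ with hFdef
  have hglue : ∀ η R (hR : 0 ≤ R), ∀ q ∈ WaveAux.D T R, F η q = sol R η q := by
    intro η R hR q hq
    show sol (|q.2|) η q = sol R η q
    rcases le_total (|q.2|) R with h | h
    · exact hcons _ _ (habs q) h η q (hmemD q)
    · exact (hcons _ _ hR h η q hq).symm
  refine ⟨F, ?_, fun η => ⟨?_, ?_⟩⟩
  · -- continuity of F
    rw [continuous_iff_continuousAt]
    intro η
    apply ContinuousMap.tendsto_iff_forall_isCompact_tendstoUniformlyOn.mpr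
    intro Kset hK
    obtain ⟨R₀, hR₀⟩ : ∃ R₀ : ℝ, ∀ p ∈ Kset, |p.2| ≤ R₀ := by
      obtain ⟨R₀, hR₀⟩ := (hK.image (show Continuous fun p : Set.Icc (0 : ℝ) T × ℝ => |p.2|
        by fun_prop)).bddAbove
      exact ⟨R₀, fun p hp => hR₀ (Set.mem_image_of_mem _ hp)⟩
    set R := max R₀ 0 with hRdef
    have hR : 0 ≤ R := le_max_right _ _
    have hKD : Kset ⊆ WaveAux.D T R := by
      intro p hp
      show |p.2| ≤ R + T - (p.1 : ℝ)
      have h1 : |p.2| ≤ R₀ := hR₀ p hp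
      have h2 : (p.1 : ℝ) ≤ T := p.1.2.2
      have h3 : R₀ ≤ R := le_max_left _ _
      linarith
    obtain ⟨A, hA0, hstab⟩ := (hsol R hR).2.2
    rw [Metric.tendstoUniformlyOn_iff]
    intro ε hε
    have hεA : 0 < ε / (2 * (A + 1)) := by positivity
    have hnb : ∀ᶠ η' in nhds η, ∀ q ∈ WaveAux.D T R, dist (η q) (η' q) < ε / (2 * (A + 1)) := by
      have h1 := ContinuousMap.tendsto_iff_forall_isCompact_tendstoUniformlyOn.mp
        (Filter.tendsto_id (x := nhds η)) (WaveAux.D T R) (WaveAux.isCompact_D hT.le R)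
      exact Metric.tendstoUniformlyOn_iff.mp h1 _ hεA
    filter_upwards [hnb] with η' hη'
    intro p hpK
    have hpD := hKD hpK
    have hδ : ∀ q ∈ WaveAux.D T R, |η q - η' q| ≤ ε / (2 * (A + 1)) := by
      intro q hq
      have := hη' q hq
      rw [Real.dist_eq] at this
      exact this.le
    have hstp := hstab η η' _ hεA.le hδ p hpD
    rw [Real.dist_eq]
    have e1 : F η p = sol R η p := hglue η R hR p hpD
    have e2 : F η' p = sol R η' p := hglue η' R hR p hpD
    rw [e1, e2]
    refine hstp.trans_lt ?_
    have h2 : (0:ℝ) < 2 * (A + 1) := by positivity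
    rw [mul_div_assoc', div_lt_iff₀ h2]
    nlinarith [hε.le, hA0]
  · -- the equation
    intro p
    have hp : p ∈ WaveAux.D T (|p.2|) := hmemD p
    have e2 : sol (|p.2|) η p = WaveAux.Phi hT.le b hb (|p.2|) η (sol (|p.2|) η) p :=
      (ContinuousMap.congr_fun (hfix (|p.2|) (habs p) η) p).symm
    have e3 : WaveAux.Phi hT.le b hb (|p.2|) η (sol (|p.2|) η) p =
        (1 / 2) * WaveAux.intOp (WaveAux.gOf hT.le b (sol (|p.2|) η)) p + η p :=
      WaveAux.Phi_apply_true hT.le hb (habs p) η (sol (|p.2|) η) hp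
    have e4 : WaveAux.intOp (WaveAux.gOf hT.le b (sol (|p.2|) η)) p =
        WaveAux.intOp (WaveAux.gOf hT.le b (F η)) p :=
      WaveAux.intOp_gOf_congr hT.le b _ _ hp
        (fun q hq => (hglue η _ (habs p) q hq).symm)
    calc F η p = sol (|p.2|) η p := rfl
      _ = (1 / 2) * WaveAux.intOp (WaveAux.gOf hT.le b (sol (|p.2|) η)) p + η p :=
          e2.trans e3
      _ = (1 / 2) * WaveAux.intOp (WaveAux.gOf hT.le b (F η)) p + η p := by rw [e4]
      _ = (1 / 2) * (∫ s in (0 : ℝ)..(p.1 : ℝ),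
            ∫ y in ((p.2 : ℝ) - (p.1 : ℝ) + s)..((p.2 : ℝ) + (p.1 : ℝ) - s),
              b ((F η) (Set.projIcc 0 T hT.le s, y))) + η p := rfl
  · -- uniqueness
    intro z hz
    apply ContinuousMap.ext
    intro p
    have hp : p ∈ WaveAux.D T (|p.2|) := hmemD p
    have hloc : ∀ q ∈ WaveAux.D T (|p.2|), z q = WaveAux.Phi hT.le b hb (|p.2|) η z q := by
      intro q hq
      calc z q = (1 / 2) * (∫ s in (0 : ℝ)..(q.1 : ℝ),
            ∫ y in ((q.2 : ℝ) - (q.1 : ℝ) + s)..((q.2 : ℝ) + (q.1 : ℝ) - s),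
              b (z (Set.projIcc 0 T hT.le s, y))) + η q := hz q
        _ = (1 / 2) * WaveAux.intOp (WaveAux.gOf hT.le b z) q + η q := rfl
        _ = WaveAux.Phi hT.le b hb (|p.2|) η z q :=
            (WaveAux.Phi_apply_true hT.le hb (habs p) η z hq).symm
    exact (huniq (|p.2|) (habs p) η z hloc p hp).trans
      (hglue η (|p.2|) (habs p) p hp).symm
end

section
/- Existence, uniqueness, and continuity of the solution operator for the deterministic heat integral equation with bounded Lipschitz drift: For every η ∈ C([0,T]×ℝ) and every bounded Lipschitz b: ℝ → ℝ, the equation z(t,x) = ∫₀^t ∫_ℝ (2π(t−s))^{−1/2} e^{−(x−y)²/(2(t−s))} b(z(s,y)) dy ds + η(t,x) has a unique solution z ∈ C([0,T]×ℝ), and the map F(η) = z is continuous from C([0,T]×ℝ) to itself in the topology of uniform convergence on compact sets. -/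
open MeasureTheory Real Set

namespace HeatAux

noncomputable def gauss (w : ℝ) : ℝ := Real.exp (-(w^2)/2) / Real.sqrt (2*π)

lemma gauss_nonneg (w : ℝ) : 0 ≤ gauss w :=
  div_nonneg (Real.exp_nonneg _) (Real.sqrt_nonneg _)

lemma gauss_eq (w : ℝ) : gauss w = Real.exp (-(2⁻¹) * w^2) / Real.sqrt (2*π) := by
  unfold gauss; ring_nf

lemma integrable_gauss : Integrable gauss := by
  have h : Integrable (fun w : ℝ => Real.exp (-(2⁻¹ : ℝ) * w^2)) := integrable_exp_neg_mul_sq (by norm_num)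
  have := h.mul_const (Real.sqrt (2*π))⁻¹
  refine this.congr (Filter.Eventually.of_forall fun w => ?_)
  rw [gauss_eq, div_eq_mul_inv]

lemma integral_gauss : ∫ w, gauss w = 1 := by
  have h : ∫ w : ℝ, Real.exp (-(2⁻¹ : ℝ) * w^2) = Real.sqrt (π / 2⁻¹) := integral_gaussian _
  have h2π : (0:ℝ) < 2*π := by positivity
  simp only [gauss_eq, div_eq_mul_inv]
  rw [MeasureTheory.integral_mul_const, h]
  rw [show π / (2:ℝ)⁻¹ = 2*π by ring]
  field_simp

/-- Change of variables for the heat kernel: for `τ > 0` and integrable-enough `φ`. -/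
lemma kernel_cov {τ : ℝ} (hτ : 0 < τ) (x : ℝ) (φ : ℝ → ℝ) :
    (∫ y : ℝ, Real.exp (-(x - y)^2 / (2*τ)) / Real.sqrt (2*π*τ) * φ y)
      = ∫ w : ℝ, gauss w * φ (x + Real.sqrt τ * w) := by
  have hsτ : 0 < Real.sqrt τ := Real.sqrt_pos.2 hτ
  have key : ∀ w : ℝ,
      gauss w * φ (x + Real.sqrt τ * w)
        = Real.sqrt τ • (fun y => Real.exp (-(x - y)^2 / (2*τ)) / Real.sqrt (2*π*τ) * φ y)
            (x + Real.sqrt τ * w) := by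
    intro w
    have h1 : (x - (x + Real.sqrt τ * w))^2 = τ * w^2 := by
      have : (x - (x + Real.sqrt τ * w))^2 = (Real.sqrt τ)^2 * w^2 := by ring
      rw [this, Real.sq_sqrt hτ.le]
    have h2 : Real.sqrt (2*π*τ) = Real.sqrt (2*π) * Real.sqrt τ := by
      rw [← Real.sqrt_mul (by positivity)]
    simp only [smul_eq_mul, h1, h2]
    have h3 : -(τ * w^2) / (2*τ) = -(w^2)/2 := by field_simp
    rw [h3]
    unfold gauss
    field_simp
  rw [show (∫ w : ℝ, gauss w * φ (x + Real.sqrt τ * w))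
      = ∫ w : ℝ, Real.sqrt τ • (fun y => Real.exp (-(x - y)^2 / (2*τ)) / Real.sqrt (2*π*τ) * φ y)
          (x + Real.sqrt τ * w) from by simp only [key]]
  rw [MeasureTheory.integral_smul]
  set f := fun y => Real.exp (-(x - y)^2 / (2*τ)) / Real.sqrt (2*π*τ) * φ y with hf
  have : (∫ w : ℝ, f (x + Real.sqrt τ * w)) = |(Real.sqrt τ)⁻¹| • ∫ y, f (x + y) := by
    have := MeasureTheory.Measure.integral_comp_mul_left (fun y => f (x + y)) (Real.sqrt τ)
    simpa using this
  rw [this, MeasureTheory.integral_add_left_eq_self]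
  rw [abs_of_nonneg (by positivity), smul_smul, smul_eq_mul]
  rw [mul_inv_cancel₀ hsτ.ne', one_mul]


section Main
variable {T : ℝ} {b : ℝ → ℝ} {L B : ℝ}

/-- The point in `Icc 0 T × ℝ` used in the substituted kernel form. -/
noncomputable def pt (hT : 0 < T) (q : ℝ × ℝ × ℝ) (w : ℝ) : Set.Icc (0:ℝ) T × ℝ :=
  (Set.projIcc 0 T hT.le q.1, q.2.2 + Real.sqrt (q.2.1 - q.1) * w)

lemma continuous_pt (hT : 0 < T) : Continuous fun qw : (ℝ × ℝ × ℝ) × ℝ => pt hT qw.1 qw.2 := by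
  unfold pt
  exact (continuous_projIcc.comp (by fun_prop)).prodMk (by fun_prop)

/-- The substituted inner integral: `q = (s, t, x)`. -/
noncomputable def inn (hT : 0 < T) (b : ℝ → ℝ) (z : C(Set.Icc (0:ℝ) T × ℝ, ℝ)) (q : ℝ × ℝ × ℝ) : ℝ :=
  ∫ w, gauss w * b (z (pt hT q w))

section
variable (hT : 0 < T) (hb : Continuous b) (hbB : ∀ x, |b x| ≤ B)
  (z : C(Set.Icc (0:ℝ) T × ℝ, ℝ))

lemma continuous_gauss : Continuous gauss := by unfold gauss; fun_prop

include hb in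
lemma continuous_integrand (q : ℝ × ℝ × ℝ) :
    Continuous fun w => gauss w * b (z (pt hT q w)) := by
  apply continuous_gauss.mul
  exact hb.comp (z.continuous.comp (((continuous_pt hT).comp
      (Continuous.prodMk_right q : Continuous fun w : ℝ => (q, w))) : Continuous fun w => pt hT (q, w).1 (q, w).2))

include hb hbB in
lemma integrable_inn (q : ℝ × ℝ × ℝ) :
    Integrable (fun w => gauss w * b (z (pt hT q w))) := by
  refine Integrable.mono' (integrable_gauss.const_mul B)
    (continuous_integrand hT hb z q).aestronglyMeasurable
    (Filter.Eventually.of_forall fun w => ?_)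
  rw [Real.norm_eq_abs, abs_mul, abs_of_nonneg (gauss_nonneg w), mul_comm B (gauss w)]
  exact mul_le_mul_of_nonneg_left (hbB _) (gauss_nonneg w)

include hb hbB in
lemma abs_inn_le (q : ℝ × ℝ × ℝ) : |inn hT b z q| ≤ B := by
  have h := MeasureTheory.norm_integral_le_of_norm_le (μ := volume)
    (f := fun w => gauss w * b (z (pt hT q w))) (g := fun w => B * gauss w)
    (integrable_gauss.const_mul B)
    (Filter.Eventually.of_forall fun w => by
      rw [Real.norm_eq_abs, abs_mul, abs_of_nonneg (gauss_nonneg w)]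
      calc gauss w * |b (z (pt hT q w))| ≤ gauss w * B :=
            mul_le_mul_of_nonneg_left (hbB _) (gauss_nonneg w)
        _ = B * gauss w := mul_comm _ _)
  rw [MeasureTheory.integral_const_mul, integral_gauss, mul_one] at h
  exact h

include hb hbB in
lemma continuous_inn : Continuous (inn hT b z) := by
  refine MeasureTheory.continuous_of_dominated
    (fun q => (continuous_integrand hT hb z q).aestronglyMeasurable)
    (fun q => Filter.Eventually.of_forall fun w => ?_)
    (integrable_gauss.const_mul B)
    (Filter.Eventually.of_forall fun w => ?_)
  · rw [Real.norm_eq_abs, abs_mul, abs_of_nonneg (gauss_nonneg w), mul_comm B (gauss w)]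
    exact mul_le_mul_of_nonneg_left (hbB _) (gauss_nonneg w)
  · exact (continuous_const.mul (hb.comp (z.continuous.comp
      ((continuous_pt hT).comp (by fun_prop : Continuous fun q : ℝ×ℝ×ℝ => (q, w)))))
      : Continuous fun q => gauss w * b (z (pt hT (q, w).1 (q, w).2)))

end

section
variable (hT : 0 < T) (hb : Continuous b) (hbB : ∀ x, |b x| ≤ B)

include hb hbB in
lemma abs_inn_sub_inn_le (hbLip : ∀ x y, |b x - b y| ≤ L * |x - y|)
    (z z' : C(Set.Icc (0:ℝ) T × ℝ, ℝ)) (q : ℝ × ℝ × ℝ) {c : ℝ}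
    (hc : ∀ w, |z (pt hT q w) - z' (pt hT q w)| ≤ c) (hL : 0 ≤ L) :
    |inn hT b z q - inn hT b z' q| ≤ L * c := by
  unfold inn
  rw [← MeasureTheory.integral_sub (integrable_inn hT hb hbB z q) (integrable_inn hT hb hbB z' q)]
  have h := MeasureTheory.norm_integral_le_of_norm_le (μ := volume)
    (f := fun w => gauss w * b (z (pt hT q w)) - gauss w * b (z' (pt hT q w)))
    (g := fun w => (L * c) * gauss w)
    (integrable_gauss.const_mul _)
    (Filter.Eventually.of_forall fun w => by
      simp only [← mul_sub, Real.norm_eq_abs, abs_mul, abs_of_nonneg (gauss_nonneg w)]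
      calc gauss w * |b (z (pt hT q w)) - b (z' (pt hT q w))|
          ≤ gauss w * (L * c) := mul_le_mul_of_nonneg_left
            (le_trans (hbLip _ _) (mul_le_mul_of_nonneg_left (hc w) hL)) (gauss_nonneg w)
        _ = (L * c) * gauss w := mul_comm _ _)
  rwa [MeasureTheory.integral_const_mul, integral_gauss, mul_one] at h

/-- The basic integral operator, as a continuous map. -/
noncomputable def Psi (hb : Continuous b) (hbB : ∀ x, |b x| ≤ B)
    (z : C(Set.Icc (0:ℝ) T × ℝ, ℝ)) : C(Set.Icc (0:ℝ) T × ℝ, ℝ) :=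
  ⟨fun p => ∫ s in (0:ℝ)..(p.1 : ℝ), inn hT b z (s, (p.1 : ℝ), p.2), by
    have : Continuous fun p : Set.Icc (0:ℝ) T × ℝ =>
        ∫ s in (0:ℝ)..((fun p : Set.Icc (0:ℝ) T × ℝ => (p.1 : ℝ)) p),
          (fun (p : Set.Icc (0:ℝ) T × ℝ) (s : ℝ) => inn hT b z (s, (p.1 : ℝ), p.2)) p s := by
      apply intervalIntegral.continuous_parametric_intervalIntegral_of_continuous
      · exact (continuous_inn hT hb hbB z).comp (by fun_prop)
      · fun_prop
    exact this⟩

lemma Psi_apply (z : C(Set.Icc (0:ℝ) T × ℝ, ℝ)) (p : Set.Icc (0:ℝ) T × ℝ) :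
    Psi hT hb hbB z p = ∫ s in (0:ℝ)..(p.1 : ℝ), inn hT b z (s, (p.1 : ℝ), p.2) := rfl

lemma abs_Psi_le (z : C(Set.Icc (0:ℝ) T × ℝ, ℝ)) (p : Set.Icc (0:ℝ) T × ℝ) :
    |Psi hT hb hbB z p| ≤ B * T := by
  have hB : 0 ≤ B := le_trans (abs_nonneg _) (hbB 0)
  have h := intervalIntegral.norm_integral_le_of_norm_le_const (a := (0:ℝ)) (b := (p.1 : ℝ))
    (C := B) (f := fun s => inn hT b z (s, (p.1 : ℝ), p.2))
    (fun s _ => by rw [Real.norm_eq_abs]; exact abs_inn_le hT hb hbB z _)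
  rw [Psi_apply, ← Real.norm_eq_abs]
  refine h.trans ?_
  rw [sub_zero, abs_of_nonneg p.1.2.1]
  exact mul_le_mul_of_nonneg_left p.1.2.2 hB

/-- Conversion from the original heat-kernel form to the substituted form. -/
lemma integral_kernel_eq (z : C(Set.Icc (0:ℝ) T × ℝ, ℝ)) (p : Set.Icc (0:ℝ) T × ℝ) :
    (∫ s in (0:ℝ)..((p.1 : ℝ)), ∫ y : ℝ,
        Real.exp (-((p.2 : ℝ) - y) ^ 2 / (2 * ((p.1 : ℝ) - s))) /
            Real.sqrt (2 * π * ((p.1 : ℝ) - s)) *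
          b (z (Set.projIcc 0 T hT.le s, y)))
      = Psi hT hb hbB z p := by
  rw [Psi_apply]
  apply intervalIntegral.integral_congr_ae
  have h1 : ∀ᵐ s : ℝ, s ≠ (p.1 : ℝ) := by
    refine (MeasureTheory.ae_iff).2 ?_
    simp only [ne_eq, not_not, Set.setOf_eq_eq_singleton]
    exact Real.volume_singleton
  filter_upwards [h1] with s hs hmem
  have ht0 : (0:ℝ) ≤ (p.1 : ℝ) := p.1.2.1
  rw [Set.uIoc_of_le ht0] at hmem
  have hst : s < (p.1 : ℝ) := lt_of_le_of_ne hmem.2 hs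
  have hτ : 0 < (p.1 : ℝ) - s := by linarith
  have := kernel_cov hτ (p.2 : ℝ) (fun y => b (z (Set.projIcc 0 T hT.le s, y)))
  rw [show (2 * π * ((p.1:ℝ) - s)) = 2 * π * ((p.1:ℝ) - s) from rfl]
  rw [this]
  rfl

/-- The Picard operator on bounded continuous functions. -/
noncomputable def Phi (η : C(Set.Icc (0:ℝ) T × ℝ, ℝ))
    (u : BoundedContinuousFunction (Set.Icc (0:ℝ) T × ℝ) ℝ) :
    BoundedContinuousFunction (Set.Icc (0:ℝ) T × ℝ) ℝ :=
  BoundedContinuousFunction.ofNormedAddCommGroup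
    (Psi hT hb hbB (u.toContinuousMap + η))
    (Psi hT hb hbB (u.toContinuousMap + η)).continuous (B * T)
    (fun p => by rw [Real.norm_eq_abs]; exact abs_Psi_le hT hb hbB _ p)

lemma Phi_apply (η : C(Set.Icc (0:ℝ) T × ℝ, ℝ))
    (u : BoundedContinuousFunction (Set.Icc (0:ℝ) T × ℝ) ℝ) (p : Set.Icc (0:ℝ) T × ℝ) :
    Phi hT hb hbB η u p = Psi hT hb hbB (u.toContinuousMap + η) p := rfl

lemma norm_Phi_le (η : C(Set.Icc (0:ℝ) T × ℝ, ℝ))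
    (u : BoundedContinuousFunction (Set.Icc (0:ℝ) T × ℝ) ℝ) :
    ‖Phi hT hb hbB η u‖ ≤ B * T := by
  have hB : 0 ≤ B := le_trans (abs_nonneg _) (hbB 0)
  refine (BoundedContinuousFunction.norm_le (by positivity)).2 fun p => ?_
  rw [Real.norm_eq_abs, Phi_apply]
  exact abs_Psi_le hT hb hbB _ p

variable (hbLip : ∀ x y, |b x - b y| ≤ L * |x - y|) (hL : 0 ≤ L)

include hbLip hL in
lemma iterate_bound (η : C(Set.Icc (0:ℝ) T × ℝ, ℝ))
    (u v : BoundedContinuousFunction (Set.Icc (0:ℝ) T × ℝ) ℝ) :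
    ∀ (n : ℕ) (p : Set.Icc (0:ℝ) T × ℝ),
      |((Phi hT hb hbB η)^[n] u) p - ((Phi hT hb hbB η)^[n] v) p|
        ≤ (L * (p.1 : ℝ))^n / n.factorial * dist u v := by
  intro n
  induction n with
  | zero =>
    intro p
    simpa [Real.dist_eq] using BoundedContinuousFunction.dist_coe_le_dist (f := u) (g := v) p
  | succ n ih =>
    intro p
    set D := dist u v with hD
    have hD0 : 0 ≤ D := dist_nonneg
    set a := (Phi hT hb hbB η)^[n] u with ha
    set c := (Phi hT hb hbB η)^[n] v with hc
    rw [Function.iterate_succ_apply', Function.iterate_succ_apply']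
    rw [show ((Phi hT hb hbB η) a) p - ((Phi hT hb hbB η) c) p
        = (∫ s in (0:ℝ)..(p.1 : ℝ), inn hT b (a.toContinuousMap + η) (s, (p.1:ℝ), p.2))
          - (∫ s in (0:ℝ)..(p.1 : ℝ), inn hT b (c.toContinuousMap + η) (s, (p.1:ℝ), p.2)) from rfl]
    have hint : ∀ (zc : C(Set.Icc (0:ℝ) T × ℝ, ℝ)),
        IntervalIntegrable (fun s => inn hT b zc (s, (p.1:ℝ), p.2)) volume 0 (p.1 : ℝ) :=
      fun zc => ((continuous_inn hT hb hbB zc).comp (by fun_prop)).intervalIntegrable _ _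
    rw [← intervalIntegral.integral_sub (hint _) (hint _)]
    have ht0 : (0:ℝ) ≤ (p.1 : ℝ) := p.1.2.1
    have htT : (p.1 : ℝ) ≤ T := p.1.2.2
    have hbnd : ∀ s ∈ Set.uIoc (0:ℝ) (p.1 : ℝ),
        ‖inn hT b (a.toContinuousMap + η) (s, (p.1:ℝ), p.2)
          - inn hT b (c.toContinuousMap + η) (s, (p.1:ℝ), p.2)‖
        ≤ L^(n+1) * D / n.factorial * s^n := by
      intro s hs
      rw [Set.uIoc_of_le ht0] at hs
      have hs0 : 0 < s := hs.1
      have hsT : s ≤ T := hs.2.trans htT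
      have hproj : ((Set.projIcc 0 T hT.le s : Set.Icc (0:ℝ) T) : ℝ) = s := by
        rw [Set.projIcc_of_mem hT.le ⟨hs0.le, hsT⟩]
      rw [Real.norm_eq_abs]
      have key := abs_inn_sub_inn_le hT hb hbB hbLip
        (a.toContinuousMap + η) (c.toContinuousMap + η) (s, (p.1:ℝ), p.2)
        (c := (L * s)^n / n.factorial * D) (fun w => by
          have := ih (pt hT (s, (p.1:ℝ), p.2) w)
          simp only [ContinuousMap.add_apply]
          rw [show a.toContinuousMap (pt hT (s, (p.1:ℝ), p.2) w) + η (pt hT (s, (p.1:ℝ), p.2) w)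
              - (c.toContinuousMap (pt hT (s, (p.1:ℝ), p.2) w) + η (pt hT (s, (p.1:ℝ), p.2) w))
              = a (pt hT (s, (p.1:ℝ), p.2) w) - c (pt hT (s, (p.1:ℝ), p.2) w) from by
                simp only [BoundedContinuousFunction.coe_toContinuousMap]
                ring]
          refine this.trans ?_
          rw [show ((pt hT (s, (p.1:ℝ), p.2) w).1 : ℝ) = s from hproj]) hL
      refine key.trans (le_of_eq ?_)
      rw [mul_pow]
      have : (0:ℝ) < n.factorial := by positivity
      field_simp
      ring
    have h2 := intervalIntegral.norm_integral_le_abs_of_norm_le (μ := volume)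
      (f := fun s => inn hT b (a.toContinuousMap + η) (s, (p.1:ℝ), p.2)
          - inn hT b (c.toContinuousMap + η) (s, (p.1:ℝ), p.2))
      (g := fun s => L^(n+1) * D / n.factorial * s^n)
      (by
        rw [MeasureTheory.ae_restrict_iff' measurableSet_uIoc]
        exact Filter.Eventually.of_forall hbnd)
      ((continuous_const.mul (continuous_pow n)).intervalIntegrable _ _)
    rw [← Real.norm_eq_abs]
    refine h2.trans ?_
    rw [intervalIntegral.integral_const_mul, integral_pow, zero_pow (by omega : n+1 ≠ 0), sub_zero]
    have hnn : (0:ℝ) ≤ L^(n+1) * D / n.factorial * ((p.1:ℝ)^(n+1)/((n:ℝ)+1)) :=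
      mul_nonneg (div_nonneg (mul_nonneg (pow_nonneg hL _) hD0) (by positivity))
        (div_nonneg (pow_nonneg ht0 _) (by positivity))
    rw [show ((n:ℕ)+1 : ℝ) = ((n:ℝ)+1) from by push_cast; ring] at *
    rw [abs_of_nonneg hnn]
    apply le_of_eq
    rw [mul_pow, Nat.factorial_succ]
    have h1 : (0:ℝ) < n.factorial := by positivity
    push_cast
    field_simp

include hbLip hL in
lemma dist_iterate_le (η : C(Set.Icc (0:ℝ) T × ℝ, ℝ))
    (u v : BoundedContinuousFunction (Set.Icc (0:ℝ) T × ℝ) ℝ) (n : ℕ) :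
    dist ((Phi hT hb hbB η)^[n] u) ((Phi hT hb hbB η)^[n] v)
      ≤ (L * T)^n / n.factorial * dist u v := by
  have hf : (0:ℝ) < n.factorial := by positivity
  refine (BoundedContinuousFunction.dist_le (by positivity)).2 fun p => ?_
  rw [Real.dist_eq]
  refine (iterate_bound hT hb hbB hbLip hL η u v n p).trans ?_
  have ht0 : (0:ℝ) ≤ (p.1 : ℝ) := p.1.2.1
  have htT : (p.1 : ℝ) ≤ T := p.1.2.2
  have : (L * (p.1:ℝ))^n ≤ (L * T)^n :=
    pow_le_pow_left₀ (by positivity) (by nlinarith) n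
  have hd : (0:ℝ) ≤ dist u v := dist_nonneg
  apply mul_le_mul_of_nonneg_right _ hd
  gcongr

include hbLip hL in
lemma phi_exists_unique (η : C(Set.Icc (0:ℝ) T × ℝ, ℝ)) :
    ∃ u : BoundedContinuousFunction (Set.Icc (0:ℝ) T × ℝ) ℝ,
      Phi hT hb hbB η u = u ∧
      ∀ v, Phi hT hb hbB η v = v → v = u := by
  obtain ⟨n₀, hn₀⟩ : ∃ n : ℕ, (L * T)^n / n.factorial < 1 :=
    ((FloorSemiring.tendsto_pow_div_factorial_atTop (K := ℝ) (L * T)).eventually_lt_const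
      one_pos).exists
  set K : NNReal := Real.toNNReal ((L * T)^n₀ / n₀.factorial) with hK
  have hcontr : ContractingWith K ((Phi hT hb hbB η)^[n₀]) := by
    constructor
    · rw [hK, ← NNReal.coe_lt_coe]
      push_cast
      rw [Real.coe_toNNReal _ (by positivity)]
      exact hn₀
    · refine LipschitzWith.of_dist_le_mul fun u v => ?_
      rw [hK, Real.coe_toNNReal _ (by positivity)]
      exact dist_iterate_le hT hb hbB hbLip hL η u v n₀
  have hfix : Function.IsFixedPt (Phi hT hb hbB η) (hcontr.fixedPoint ((Phi hT hb hbB η)^[n₀])) :=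
    hcontr.isFixedPt_fixedPoint_iterate
  refine ⟨_, hfix, fun v hv => ?_⟩
  have hv' : Function.IsFixedPt ((Phi hT hb hbB η)^[n₀]) v := (Function.IsFixedPt.iterate hv n₀)
  exact hcontr.fixedPoint_unique' hv'
    ((Function.IsFixedPt.iterate hfix n₀))

lemma iUnion_Icc_nat : (⋃ n : ℕ, Set.Icc (-(n:ℝ)) (n:ℝ)) = Set.univ := by
  ext x
  simp only [Set.mem_iUnion, Set.mem_Icc, Set.mem_univ, iff_true]
  refine ⟨⌈|x|⌉₊, ?_, ?_⟩
  · have := Nat.le_ceil |x|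
    have h2 := neg_abs_le x
    push_cast at *
    linarith [le_abs_self x]
  · exact (le_abs_self x).trans (Nat.le_ceil |x|)

lemma tail_tendsto : Filter.Tendsto (fun n : ℕ => ∫ w in (Set.Icc (-(n:ℝ)) (n:ℝ))ᶜ, gauss w)
    Filter.atTop (nhds 0) := by
  have h1 : ∀ n : ℕ, (∫ w in (Set.Icc (-(n:ℝ)) (n:ℝ))ᶜ, gauss w)
      = (∫ w, gauss w) - ∫ w in Set.Icc (-(n:ℝ)) (n:ℝ), gauss w := by
    intro n
    have := MeasureTheory.integral_add_compl (measurableSet_Icc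
      (a := -(n:ℝ)) (b := (n:ℝ))) integrable_gauss
    linarith
  simp only [h1]
  have h2 : Filter.Tendsto (fun n : ℕ => ∫ w in Set.Icc (-(n:ℝ)) (n:ℝ), gauss w)
      Filter.atTop (nhds (∫ w, gauss w)) := by
    have := MeasureTheory.tendsto_setIntegral_of_monotone
      (s := fun n : ℕ => Set.Icc (-(n:ℝ)) (n:ℝ)) (f := gauss)
      (fun n => measurableSet_Icc)
      (fun m n hmn => Set.Icc_subset_Icc (by push_cast; simp [neg_le_neg_iff]; exact_mod_cast hmn)
        (by exact_mod_cast hmn))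
      (by rw [iUnion_Icc_nat]; exact integrable_gauss.integrableOn)
    rwa [iUnion_Icc_nat, MeasureTheory.setIntegral_univ] at this
  simpa using (tendsto_const_nhds (x := ∫ w, gauss w)).sub h2

lemma tail_nonneg (R : ℝ) : 0 ≤ ∫ w in (Set.Icc (-R) R)ᶜ, gauss w :=
  MeasureTheory.setIntegral_nonneg measurableSet_Icc.compl (fun w _ => gauss_nonneg w)

include hb hbB hbLip hL in
/-- Key local estimate for the difference of inner integrals. -/
lemma inn_diff_le {z z₀ : C(Set.Icc (0:ℝ) T × ℝ, ℝ)} {δ R τR : ℝ}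
    (hδ : 0 ≤ δ) (hR : 0 ≤ R) (hτR : τR = ∫ w in (Set.Icc (-R) R)ᶜ, gauss w)
    {q : ℝ × ℝ × ℝ} (hq : q.2.1 - q.1 ≤ T)
    (hclose : ∀ w ∈ Set.Icc (-R) R, |z (pt hT q w) - z₀ (pt hT q w)| ≤ δ) :
    |inn hT b z q - inn hT b z₀ q| ≤ L * δ + 2 * B * τR := by
  have hB : 0 ≤ B := le_trans (abs_nonneg _) (hbB 0)
  have hint1 := integrable_inn hT hb hbB z q
  have hint2 := integrable_inn hT hb hbB z₀ q
  set F : ℝ → ℝ := fun w => gauss w * b (z (pt hT q w)) - gauss w * b (z₀ (pt hT q w)) with hF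
  have hFint : Integrable F := hint1.sub hint2
  have hsplit : ∫ w, F w = (∫ w in Set.Icc (-R) R, F w) + ∫ w in (Set.Icc (-R) R)ᶜ, F w :=
    (MeasureTheory.integral_add_compl measurableSet_Icc hFint).symm
  have hdiff : inn hT b z q - inn hT b z₀ q = ∫ w, F w := by
    rw [hF, MeasureTheory.integral_sub hint1 hint2]; rfl
  rw [hdiff, hsplit]
  refine (abs_add_le _ _).trans (add_le_add ?_ ?_)
  · -- main part
    have h := MeasureTheory.norm_integral_le_of_norm_le
      (μ := volume.restrict (Set.Icc (-R) R))
      (f := F) (g := fun w => (L * δ) * gauss w)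
      ((integrable_gauss.const_mul _).restrict)
      (by
        rw [MeasureTheory.ae_restrict_iff' measurableSet_Icc]
        refine Filter.Eventually.of_forall fun w hw => ?_
        rw [hF]
        simp only [← mul_sub, Real.norm_eq_abs, abs_mul, abs_of_nonneg (gauss_nonneg w)]
        calc gauss w * |b (z (pt hT q w)) - b (z₀ (pt hT q w))|
            ≤ gauss w * (L * δ) := mul_le_mul_of_nonneg_left
              ((hbLip _ _).trans (mul_le_mul_of_nonneg_left (hclose w hw) hL)) (gauss_nonneg w)
          _ = (L * δ) * gauss w := mul_comm _ _)
    rw [Real.norm_eq_abs] at h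
    refine h.trans ?_
    rw [MeasureTheory.integral_const_mul]
    calc L * δ * ∫ w in Set.Icc (-R) R, gauss w
        ≤ L * δ * ∫ w, gauss w := by
          apply mul_le_mul_of_nonneg_left _ (by positivity)
          exact MeasureTheory.setIntegral_le_integral integrable_gauss
            (Filter.Eventually.of_forall fun w => gauss_nonneg w)
      _ = L * δ := by rw [integral_gauss, mul_one]
  · -- tail part
    have h := MeasureTheory.norm_integral_le_of_norm_le
      (μ := volume.restrict (Set.Icc (-R) R)ᶜ)
      (f := F) (g := fun w => (2 * B) * gauss w)
      ((integrable_gauss.const_mul _).restrict)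
      (Filter.Eventually.of_forall fun w => by
        rw [hF]
        simp only [← mul_sub, Real.norm_eq_abs, abs_mul, abs_of_nonneg (gauss_nonneg w)]
        calc gauss w * |b (z (pt hT q w)) - b (z₀ (pt hT q w))|
            ≤ gauss w * (2 * B) := mul_le_mul_of_nonneg_left
              ((abs_sub _ _).trans (by linarith [hbB (z (pt hT q w)), hbB (z₀ (pt hT q w))]))
              (gauss_nonneg w)
          _ = (2 * B) * gauss w := mul_comm _ _)
    rw [Real.norm_eq_abs] at h
    refine h.trans ?_
    rw [MeasureTheory.integral_const_mul, hτR, mul_assoc]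

include hb hbB hbLip hL in
lemma continuous_Psi : Continuous (Psi hT hb hbB) := by
  have hB : 0 ≤ B := le_trans (abs_nonneg _) (hbB 0)
  rw [continuous_iff_continuousAt]
  intro z₀
  rw [ContinuousAt, ContinuousMap.tendsto_iff_forall_isCompact_tendstoUniformlyOn]
  intro K hK
  rw [Metric.tendstoUniformlyOn_iff]
  intro ε hε
  -- bound on the second coordinate of K
  obtain ⟨M, hM⟩ := (hK.image (continuous_abs.comp continuous_snd)).bddAbove
  set M₀ := max M 0 with hM₀
  have hM₀0 : 0 ≤ M₀ := le_max_right _ _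
  have hMK : ∀ p ∈ K, |p.2| ≤ M₀ := fun p hp =>
    le_trans (hM (Set.mem_image_of_mem _ hp)) (le_max_left _ _)
  -- choose the truncation radius
  have htail : Filter.Tendsto (fun n : ℕ => 2 * B * T * ∫ w in (Set.Icc (-(n:ℝ)) (n:ℝ))ᶜ, gauss w)
      Filter.atTop (nhds 0) := by
    simpa using tail_tendsto.const_mul (2 * B * T)
  obtain ⟨R, hR⟩ := (htail.eventually_lt_const (by positivity : (0:ℝ) < ε/2)).exists
  set τR : ℝ := ∫ w in (Set.Icc (-(R:ℝ)) (R:ℝ))ᶜ, gauss w with hτR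
  have hτR0 : 0 ≤ τR := tail_nonneg _
  -- choose δ
  set r : ℝ := ε/2 - 2 * B * T * τR with hr
  have hr0 : 0 < r := by rw [hr]; linarith [hR]
  set δ : ℝ := r / (T * L + 1) with hδdef
  have hTL : 0 < T * L + 1 := by positivity
  have hδ0 : 0 < δ := div_pos hr0 hTL
  -- the big compact set
  set M' : ℝ := M₀ + Real.sqrt T * R with hM'
  set K' : Set (Set.Icc (0:ℝ) T × ℝ) := Set.univ ×ˢ Set.Icc (-M') M' with hK'
  have hK'c : IsCompact K' := by
    haveI : CompactSpace (Set.Icc (0:ℝ) T) := isCompact_iff_compactSpace.mp isCompact_Icc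
    exact isCompact_univ.prod isCompact_Icc
  -- membership of points
  have hpt : ∀ (p : Set.Icc (0:ℝ) T × ℝ), p ∈ K → ∀ s ∈ Set.uIoc (0:ℝ) (p.1:ℝ),
      ∀ w ∈ Set.Icc (-(R:ℝ)) (R:ℝ), pt hT (s, (p.1:ℝ), p.2) w ∈ K' := by
    intro p hp s hs w hw
    refine ⟨Set.mem_univ _, ?_⟩
    have h1 : |p.2 + Real.sqrt ((p.1:ℝ) - s) * w| ≤ M' := by
      have ht0 : (0:ℝ) ≤ (p.1:ℝ) := p.1.2.1
      rw [Set.uIoc_of_le ht0] at hs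
      have hsq : Real.sqrt ((p.1:ℝ) - s) ≤ Real.sqrt T :=
        Real.sqrt_le_sqrt (by linarith [p.1.2.2, hs.1])
      have hw' : |w| ≤ (R:ℝ) := abs_le.2 hw
      calc |p.2 + Real.sqrt ((p.1:ℝ) - s) * w| ≤ |p.2| + |Real.sqrt ((p.1:ℝ) - s) * w| :=
            abs_add_le _ _
        _ ≤ M₀ + Real.sqrt T * R := by
            refine add_le_add (hMK p hp) ?_
            rw [abs_mul, abs_of_nonneg (Real.sqrt_nonneg _)]
            exact mul_le_mul hsq hw' (abs_nonneg _) (Real.sqrt_nonneg _)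
        _ = M' := rfl
    exact abs_le.1 h1
  -- the neighborhood
  haveI : CompactSpace K' := isCompact_iff_compactSpace.mp hK'c
  have hnbhd : {z : C(Set.Icc (0:ℝ) T × ℝ, ℝ) |
      dist (z.restrict K') (z₀.restrict K') < δ} ∈ nhds z₀ := by
    have hcont : Continuous fun z : C(Set.Icc (0:ℝ) T × ℝ, ℝ) => z.restrict K' :=
      ContinuousMap.continuous_restrict K'
    have : Metric.ball (z₀.restrict K') δ ∈ nhds (z₀.restrict K') := Metric.ball_mem_nhds _ hδ0
    exact hcont.continuousAt.preimage_mem_nhds this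
  filter_upwards [hnbhd] with z hz p hp
  -- now the estimate
  have hest : ∀ s ∈ Set.uIoc (0:ℝ) (p.1:ℝ),
      ‖inn hT b z (s, (p.1:ℝ), p.2) - inn hT b z₀ (s, (p.1:ℝ), p.2)‖ ≤ L * δ + 2 * B * τR := by
    intro s hs
    rw [Real.norm_eq_abs]
    refine inn_diff_le hT hb hbB hbLip hL hδ0.le (by positivity) hτR
      (q := (s, (p.1:ℝ), p.2)) ?_ ?_
    · have ht0 : (0:ℝ) ≤ (p.1:ℝ) := p.1.2.1
      rw [Set.uIoc_of_le ht0] at hs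
      simp only
      linarith [p.1.2.2, hs.1]
    · intro w hw
      have hmem := hpt p hp s hs w hw
      have h1 : dist ((z.restrict K') ⟨_, hmem⟩) ((z₀.restrict K') ⟨_, hmem⟩)
          ≤ dist (z.restrict K') (z₀.restrict K') := ContinuousMap.dist_apply_le_dist _
      rw [ContinuousMap.restrict_apply, ContinuousMap.restrict_apply, Real.dist_eq] at h1
      exact h1.trans hz.le
  have hdiff : dist (Psi hT hb hbB z₀ p) (Psi hT hb hbB z p)
      ≤ (L * δ + 2 * B * τR) * T := by
    rw [Real.dist_eq, Psi_apply, Psi_apply]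
    have hi : ∀ (zc : C(Set.Icc (0:ℝ) T × ℝ, ℝ)),
        IntervalIntegrable (fun s => inn hT b zc (s, (p.1:ℝ), p.2)) volume 0 (p.1:ℝ) :=
      fun zc => ((continuous_inn hT hb hbB zc).comp (by fun_prop)).intervalIntegrable _ _
    rw [← intervalIntegral.integral_sub (hi z₀) (hi z)]
    have h := intervalIntegral.norm_integral_le_of_norm_le_const
      (C := L * δ + 2 * B * τR)
      (f := fun s => inn hT b z₀ (s, (p.1:ℝ), p.2) - inn hT b z (s, (p.1:ℝ), p.2))
      (fun s hs => by
        rw [Real.norm_eq_abs, abs_sub_comm, ← Real.norm_eq_abs]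
        exact hest s hs)
    rw [← Real.norm_eq_abs]
    refine h.trans ?_
    rw [sub_zero, abs_of_nonneg p.1.2.1]
    exact mul_le_mul_of_nonneg_left p.1.2.2 (by positivity)
  refine lt_of_le_of_lt hdiff ?_
  have h1 : L * δ * T ≤ r := by
    have heq : L * δ * T = r * (L * T) / (T * L + 1) := by rw [hδdef]; ring
    rw [heq, div_le_iff₀ hTL]
    nlinarith [hr0.le, mul_nonneg hL hT.le]
  have h2 : 2 * B * τR * T = 2 * B * T * τR := by ring
  calc (L * δ + 2 * B * τR) * T = L * δ * T + 2 * B * τR * T := by ring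
    _ ≤ r + 2 * B * T * τR := by rw [h2]; exact add_le_add_left h1 _
    _ = ε/2 := by rw [hr]; ring
    _ < ε := by linarith

end
end Main
end HeatAux

theorem heat_solution_operator (T : ℝ) (hT : 0 < T) (b : ℝ → ℝ) (L B : ℝ)
    (hbLip : ∀ x y, |b x - b y| ≤ L * |x - y|) (hbB : ∀ x, |b x| ≤ B) :
    ∃ F : C(Set.Icc (0 : ℝ) T × ℝ, ℝ) → C(Set.Icc (0 : ℝ) T × ℝ, ℝ),
      Continuous F ∧
      (∀ η : C(Set.Icc (0 : ℝ) T × ℝ, ℝ),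
        (∀ p : Set.Icc (0 : ℝ) T × ℝ,
          (F η) p =
            (∫ s in (0 : ℝ)..(p.1 : ℝ), ∫ y : ℝ,
              Real.exp (-((p.2 : ℝ) - y) ^ 2 / (2 * ((p.1 : ℝ) - s))) /
                  Real.sqrt (2 * π * ((p.1 : ℝ) - s)) *
                b ((F η) (Set.projIcc 0 T hT.le s, y))) + η p) ∧
        (∀ z : C(Set.Icc (0 : ℝ) T × ℝ, ℝ),
          (∀ p : Set.Icc (0 : ℝ) T × ℝ,
            z p = (∫ s in (0 : ℝ)..(p.1 : ℝ), ∫ y : ℝ,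
              Real.exp (-((p.2 : ℝ) - y) ^ 2 / (2 * ((p.1 : ℝ) - s))) /
                  Real.sqrt (2 * π * ((p.1 : ℝ) - s)) *
                b (z (Set.projIcc 0 T hT.le s, y))) + η p) → z = F η)) := by
  classical
  set L' : ℝ := max L 0 with hL'def
  have hL' : 0 ≤ L' := le_max_right _ _
  have hbLip' : ∀ x y, |b x - b y| ≤ L' * |x - y| := fun x y =>
    (hbLip x y).trans (mul_le_mul_of_nonneg_right (le_max_left _ _) (abs_nonneg _))
  have hb : Continuous b := by
    have : LipschitzWith (Real.toNNReal L') b := by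
      refine LipschitzWith.of_dist_le_mul fun x y => ?_
      rw [Real.dist_eq, Real.dist_eq, Real.coe_toNNReal _ hL']
      exact hbLip' x y
    exact this.continuous
  choose u hufix huniq using fun η => HeatAux.phi_exists_unique hT hb hbB hbLip' hL' η
  set F : C(Set.Icc (0 : ℝ) T × ℝ, ℝ) → C(Set.Icc (0 : ℝ) T × ℝ, ℝ) :=
    fun η => (u η).toContinuousMap + η with hFdef
  have hFap : ∀ η, F η = (u η).toContinuousMap + η := fun _ => rfl
  refine ⟨F, ?_, fun η => ⟨?_, ?_⟩⟩
  · -- Continuity of F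
    set G : ℕ → C(Set.Icc (0 : ℝ) T × ℝ, ℝ) → C(Set.Icc (0 : ℝ) T × ℝ, ℝ) :=
      fun n η => ((HeatAux.Phi hT hb hbB η)^[n] 0).toContinuousMap with hGdef
    have hGcont : ∀ n, Continuous (G n) := by
      intro n
      induction n with
      | zero => exact continuous_const
      | succ n ih =>
        have hstep : G (n+1) = fun η => HeatAux.Psi hT hb hbB (G n η + η) := by
          funext η
          rw [hGdef]
          simp only [Function.iterate_succ_apply']
          rfl
        rw [hstep]
        exact (HeatAux.continuous_Psi hT hb hbB hbLip' hL').comp (ih.add continuous_id)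
    have hTU : TendstoUniformly G (fun η => ((u η).toContinuousMap :
        C(Set.Icc (0 : ℝ) T × ℝ, ℝ))) Filter.atTop := by
      intro V hV
      obtain ⟨⟨Kset, Vent⟩, ⟨hKc, hVent⟩, hsub⟩ :=
        (ContinuousMap.hasBasis_compactConvergenceUniformity).mem_iff.1 hV
      obtain ⟨ε, hε, hVε⟩ := Metric.mem_uniformity_dist.1 hVent
      have hB : 0 ≤ B := le_trans (abs_nonneg _) (hbB 0)
      have htend : Filter.Tendsto (fun n : ℕ => (L' * T)^n / n.factorial * (B * T))
          Filter.atTop (nhds 0) := by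
        simpa using (FloorSemiring.tendsto_pow_div_factorial_atTop (K := ℝ) (L' * T)).mul_const
          (B * T)
      filter_upwards [htend.eventually_lt_const hε] with n hn η
      refine hsub ?_
      intro x _
      refine hVε ?_
      have h1 : dist ((u η) x) (((HeatAux.Phi hT hb hbB η)^[n] 0) x)
          ≤ dist (u η) ((HeatAux.Phi hT hb hbB η)^[n] 0) :=
        BoundedContinuousFunction.dist_coe_le_dist x
      have h2 : (HeatAux.Phi hT hb hbB η)^[n] (u η) = u η :=
        Function.IsFixedPt.iterate (hufix η) n
      have h3 : dist (u η) ((HeatAux.Phi hT hb hbB η)^[n] 0)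
          ≤ (L' * T)^n / n.factorial * dist (u η) 0 := by
        conv_lhs => rw [← h2]
        exact HeatAux.dist_iterate_le hT hb hbB hbLip' hL' η (u η) 0 n
      have h4 : dist (u η) (0 : BoundedContinuousFunction (Set.Icc (0:ℝ) T × ℝ) ℝ) ≤ B * T := by
        rw [dist_zero_right]
        conv_lhs => rw [← hufix η]
        exact HeatAux.norm_Phi_le hT hb hbB η (u η)
      have h5 : dist ((u η) x) (((HeatAux.Phi hT hb hbB η)^[n] 0) x)
          ≤ (L' * T)^n / n.factorial * (B * T) := by
        refine h1.trans (h3.trans ?_)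
        exact mul_le_mul_of_nonneg_left h4
          (div_nonneg (pow_nonneg (mul_nonneg hL' hT.le) n) (by positivity))
      exact lt_of_le_of_lt h5 hn
    have hcont : Continuous fun η => ((u η).toContinuousMap :
        C(Set.Icc (0 : ℝ) T × ℝ, ℝ)) :=
      hTU.continuous (Filter.Eventually.of_forall hGcont).frequently
    exact hcont.add continuous_id
  · -- F η satisfies the equation
    intro p
    rw [hFap η, HeatAux.integral_kernel_eq hT hb hbB ((u η).toContinuousMap + η) p]
    have h1 : ((u η).toContinuousMap + η) p = (u η) p + η p := rfl
    rw [h1]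
    congr 1
    conv_lhs => rw [← hufix η]
    rfl
  · -- uniqueness
    intro z hzeq
    have hzψ : ∀ p, z p - η p = HeatAux.Psi hT hb hbB z p := fun p => by
      have h := hzeq p
      rw [HeatAux.integral_kernel_eq hT hb hbB z p] at h
      linarith
    set v : BoundedContinuousFunction (Set.Icc (0:ℝ) T × ℝ) ℝ :=
      BoundedContinuousFunction.ofNormedAddCommGroup (fun p => z p - η p)
        (z.continuous.sub η.continuous) (B * T)
        (fun p => by
          show ‖z p - η p‖ ≤ B * T
          rw [Real.norm_eq_abs, hzψ p]
          exact HeatAux.abs_Psi_le hT hb hbB z p) with hvdef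
    have hvz : v.toContinuousMap + η = z := by
      ext p
      show (z p - η p) + η p = z p
      ring
    have hvfix : HeatAux.Phi hT hb hbB η v = v := by
      ext p
      rw [HeatAux.Phi_apply, hvz]
      exact (hzψ p).symm
    have hvu : v = u η := huniq η v hvfix
    rw [hFap η, ← hvu, hvz]
end
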